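/- arXiv:1108.6295 — 5 statements merged into one kernel-verified Lean document; each statement's English description precedes it below -/
import Mathlib

section
/- Let l ≥ 1 and n ≥ 3 be integers, and let W be a word over the alphabet {1,…,l} that is not strongly n-divisible over the set Z of all noncyclic words of length 2 (with boundary 2n). Then every family of pairwise disjoint occurrences in W of subwords of the form z^m, where z is a noncyclic word of length 2 and m > 2n, such that no two of the periods z are cyclic rotations of each other, has at most (2l−1)(n−1)(n−2)/2 members. -/
/-- `u` is lexicographically greater than `v`: at the first position where they
differ, `u` has the larger letter (words where one is a prefix of the other are
incomparable). -/
def WordGt {α : Type*} [LinearOrder α] (u v : List α) : Prop :=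
  List.Lex (· < ·) v u ∧ ¬ v <+: u

/-- `wpow z k` is the concatenation of `k` copies of the word `z`. -/
def wpow {α : Type*} (z : List α) : ℕ → List α
  | 0 => []
  | k + 1 => z ++ wpow z k

/-- A word is noncyclic (primitive) if it is nonempty and is not a proper power. -/
def Noncyclic {α : Type*} (z : List α) : Prop :=
  z ≠ [] ∧ ∀ (v : List α) (k : ℕ), 2 ≤ k → z ≠ wpow v k

/-- `W` is `n`-divisible: `W = W₀W₁⋯Wₙ` with `W₁,…,Wₙ` nonempty and in strictly
decreasing lexicographic order. -/
def NDivisible {α : Type*} [LinearOrder α] (W : List α) (n : ℕ) : Prop :=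
  ∃ (W₀ : List α) (f : Fin n → List α),
    W = W₀ ++ (List.ofFn f).flatten ∧
    (∀ i, f i ≠ []) ∧
    (∀ i j, i < j → WordGt (f i) (f j))

/-- `W` is strongly `n`-divisible over the set of words `Z` (with boundary `2n`):
it is `n`-divisible with each `Wᵢ` (`1 ≤ i ≤ n`) beginning with `zᵢ^{2n}` for
pairwise distinct `z₁,…,zₙ ∈ Z`. -/
def StronglyNDivisible {α : Type*} [LinearOrder α] (W : List α) (n : ℕ)
    (Z : Set (List α)) : Prop :=
  ∃ (W₀ : List α) (f : Fin n → List α) (z : Fin n → List α),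
    W = W₀ ++ (List.ofFn f).flatten ∧
    (∀ i, f i ≠ []) ∧
    (∀ i j, i < j → WordGt (f i) (f j)) ∧
    (∀ i, z i ∈ Z ∧ wpow (z i) (2 * n) <+: f i) ∧
    Function.Injective z

/-- `u` occurs as a subword of `W` starting at position `p`. -/
def OccursAt {α : Type*} (W u : List α) (p : ℕ) : Prop :=
  ∃ pre suf : List α, pre.length = p ∧ W = pre ++ u ++ suf

namespace SelAux


variable {α : Type*}

theorem wpow_succ (z : List α) (k : ℕ) : wpow z (k+1) = z ++ wpow z k := rfl

theorem wpow_length (z : List α) (k : ℕ) : (wpow z k).length = k * z.length := by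
  induction k with
  | zero => simp [wpow]
  | succ k ih => simp [wpow, ih]; ring

theorem wpow_add (z : List α) (a b : ℕ) : wpow z (a+b) = wpow z a ++ wpow z b := by
  induction a with
  | zero => simp [wpow]
  | succ a ih =>
      have : a + 1 + b = (a + b) + 1 := by omega
      rw [this, wpow_succ, ih, wpow_succ, List.append_assoc]

theorem wpow_pair_rot (a b : α) (k : ℕ) :
    wpow [a,b] (k+1) = a :: (wpow [b,a] k ++ [b]) := by
  induction k with
  | zero => simp [wpow]
  | succ k ih =>
      rw [wpow_succ, ih]
      show a :: b :: (a :: (wpow [b,a] k ++ [b])) = a :: (wpow [b,a] (k+1) ++ [b])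
      rw [wpow_succ]
      simp

theorem exists_pair_of_len2 (u : List α) (h : u.length = 2) : ∃ a b, u = [a,b] := by
  match u, h with
  | [a, b], _ => exact ⟨a, b, rfl⟩

theorem noncyclic_pair (a b : α) (hab : a ≠ b) : Noncyclic [a,b] := by
  refine ⟨by simp, ?_⟩
  intro v k hk heq
  have hlen : 2 = k * v.length := by
    have := congrArg List.length heq
    simpa [wpow_length] using this
  have hv1 : v.length = 1 := by
    by_contra hne
    rcases Nat.lt_or_ge v.length 1 with h | h
    · have h0 : v.length = 0 := by omega
      rw [h0, Nat.mul_zero] at hlen; omega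
    · have h2 : 2 ≤ v.length := by omega
      have : 4 ≤ k * v.length := by
        calc (4:ℕ) = 2 * 2 := rfl
        _ ≤ k * v.length := Nat.mul_le_mul hk h2
      omega
  have hk2 : k = 2 := by rw [hv1, Nat.mul_one] at hlen; omega
  obtain ⟨c, hc⟩ : ∃ c, v = [c] := by
    match v, hv1 with
    | [c], _ => exact ⟨c, rfl⟩
  subst hc hk2
  simp [wpow] at heq
  exact hab (heq.1.trans heq.2.symm)

theorem occursAt_drop {W u : List α} {p : ℕ} (h : OccursAt W u p) :
    W.drop p = u ++ (W.drop (p + u.length)) ∧ p + u.length ≤ W.length := by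
  obtain ⟨pre, suf, hp, hW⟩ := h
  subst hW
  have h1 : (pre ++ u ++ suf).drop p = u ++ suf := by
    rw [List.append_assoc, ← hp, List.drop_left]
  have h2 : (pre ++ u ++ suf).drop (p + u.length) = suf := by
    have : p + u.length = (pre ++ u).length := by simp [hp]
    rw [this, List.drop_left]
  refine ⟨by rw [h1, h2], by simp [hp]⟩

theorem occursAt_of_drop {W u : List α} {p : ℕ} (hle : p + u.length ≤ W.length)
    (h : W.drop p = u ++ (W.drop (p + u.length))) : OccursAt W u p := by
  refine ⟨W.take p, W.drop (p + u.length), ?_, ?_⟩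
  · simp; omega
  · conv_lhs => rw [← List.take_append_drop p W]
    rw [h, List.append_assoc]

theorem occursAt_prefix {W u v : List α} {p : ℕ} (h : OccursAt W (u ++ v) p) :
    OccursAt W u p := by
  obtain ⟨pre, suf, hp, hW⟩ := h
  exact ⟨pre, v ++ suf, hp, by simp [hW]⟩

theorem wordGt_of_two {β : Type*} [LinearOrder β] {a b c d : β} {f g : List β}
    (hf : [a,b] <+: f) (hg : [c,d] <+: g)
    (hlt : c < a ∨ (c = a ∧ d < b)) : WordGt f g := by
  obtain ⟨f', hf'⟩ := hf
  obtain ⟨g', hg'⟩ := hg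
  subst hf' hg'
  constructor
  · rcases hlt with h | ⟨h1, h2⟩
    · exact List.Lex.rel h
    · subst h1
      exact List.Lex.cons (List.Lex.rel h2)
  · rintro ⟨t, ht⟩
    simp only [List.cons_append, List.nil_append] at ht
    obtain ⟨h1, h2, -⟩ : c = a ∧ d = b ∧ (g' ++ t = f') := by
      injection ht with e1 rest
      injection rest with e2 rest2
      exact ⟨e1, e2, rest2⟩
    rcases hlt with h | ⟨-, h⟩
    · exact absurd h1 (ne_of_lt h)
    · exact absurd h2 (ne_of_lt h)



/-- encoding of a two-letter word as a number -/
def enc (l a b : ℕ) : ℕ := l * a + b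

theorem enc_lt_of_lt {l a b c d : ℕ} (hb : b < l) (h : a < c) :
    enc l a b < enc l c d := by
  unfold enc
  calc l * a + b < l * a + l := by omega
    _ = l * (a + 1) := by ring
    _ ≤ l * c := Nat.mul_le_mul_left l h
    _ ≤ l * c + d := Nat.le_add_right _ _

theorem enc_lt_iff {l a b c d : ℕ} (hb : b < l) (hd : d < l) :
    enc l a b < enc l c d ↔ (a < c ∨ (a = c ∧ b < d)) := by
  constructor
  · intro h
    rcases Nat.lt_trichotomy a c with h1 | h1 | h1
    · exact Or.inl h1
    · subst h1
      right
      refine ⟨rfl, ?_⟩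
      unfold enc at h; omega
    · have hx : enc l c d < enc l a b := enc_lt_of_lt hd h1
      omega
  · rintro (h | ⟨rfl, h⟩)
    · exact enc_lt_of_lt hb h
    · unfold enc; omega

theorem enc_inj {l a b c d : ℕ} (hb : b < l) (hd : d < l)
    (h : enc l a b = enc l c d) : a = c ∧ b = d := by
  rcases Nat.lt_trichotomy a c with h1 | h1 | h1
  · have hx : enc l a b < enc l c d := enc_lt_of_lt hb h1
    omega
  · subst h1; unfold enc at h; omega
  · have hx : enc l c d < enc l a b := enc_lt_of_lt hd h1
    omega

variable {ι : Type*}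

/-- The relation for decreasing chains. -/
def Rrel (posn : ι → ℕ) (cd : ι × Bool → ℕ) (p q : ι × Bool) : Prop :=
  posn p.1 < posn q.1 ∧ cd q < cd p

theorem Rrel.trans {posn : ι → ℕ} {cd : ι × Bool → ℕ} {p q r : ι × Bool}
    (h1 : Rrel posn cd p q) (h2 : Rrel posn cd q r) : Rrel posn cd p r :=
  ⟨lt_trans h1.1 h2.1, lt_trans h2.2 h1.2⟩

/-- a decreasing chain of length `k` ending at `(i,c)` -/
def EndCh (posn : ι → ℕ) (cd : ι × Bool → ℕ) (i : ι) (c : Bool) (k : ℕ) : Prop :=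
  ∃ L : List (ι × Bool), (L ++ [(i,c)]).Pairwise (Rrel posn cd) ∧ L.length + 1 = k

/-- a decreasing chain of length `k` starting at `(i,c)` -/
def StartCh (posn : ι → ℕ) (cd : ι × Bool → ℕ) (i : ι) (c : Bool) (k : ℕ) : Prop :=
  ∃ L : List (ι × Bool), ((i,c) :: L).Pairwise (Rrel posn cd) ∧ L.length + 1 = k

variable {posn : ι → ℕ} {cd : ι × Bool → ℕ}

theorem endCh_one (i : ι) (c : Bool) : EndCh posn cd i c 1 :=
  ⟨[], by simp, rfl⟩

theorem startCh_one (i : ι) (c : Bool) : StartCh posn cd i c 1 :=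
  ⟨[], by simp, rfl⟩

theorem endCh_last {L : List (ι × Bool)} {e : ι × Bool}
    (h : (L ++ [e]).Pairwise (Rrel posn cd)) :
    ∀ a ∈ L, Rrel posn cd a e := by
  intro a ha
  exact (List.pairwise_append.1 h).2.2 a ha e (List.mem_singleton_self e)

theorem startCh_head {L : List (ι × Bool)} {e : ι × Bool}
    (h : (e :: L).Pairwise (Rrel posn cd)) :
    ∀ a ∈ L, Rrel posn cd e a :=
  fun a ha => (List.pairwise_cons.1 h).1 a ha

theorem endCh_extend {i : ι} {c : Bool} {k : ℕ} {j : ι} {d : Bool}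
    (h : EndCh posn cd i c k) (hR : Rrel posn cd (i,c) (j,d)) :
    EndCh posn cd j d (k+1) := by
  obtain ⟨L, hL, hlen⟩ := h
  refine ⟨L ++ [(i,c)], ?_, by simp; omega⟩
  rw [List.pairwise_append]
  refine ⟨hL, by simp, ?_⟩
  intro a ha b hb
  simp only [List.mem_singleton] at hb
  subst hb
  rcases List.mem_append.1 ha with h' | h'
  · exact (endCh_last hL a h').trans hR
  · simp only [List.mem_singleton] at h'
    subst h'; exact hR

theorem startCh_extend {i : ι} {c : Bool} {k : ℕ} {j : ι} {d : Bool}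
    (h : StartCh posn cd j d k) (hR : Rrel posn cd (i,c) (j,d)) :
    StartCh posn cd i c (k+1) := by
  obtain ⟨L, hL, hlen⟩ := h
  refine ⟨(j,d) :: L, ?_, by simp; omega⟩
  rw [List.pairwise_cons]
  refine ⟨?_, hL⟩
  intro a ha
  rcases List.mem_cons.1 ha with h' | h'
  · subst h'; exact hR
  · exact hR.trans (startCh_head hL a h')

/-- glue an ending chain at `(i,ce)` and a starting chain at `(i,cs)` when
`cd (i,cs) < cd (i,ce)`, dropping `(i,ce)`. -/
theorem glue_at {i : ι} {ce cs : Bool} {r s : ℕ}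
    (he : EndCh posn cd i ce r) (hs : StartCh posn cd i cs s)
    (hcd : cd (i,cs) < cd (i,ce)) :
    ∃ L : List (ι × Bool), L.Pairwise (Rrel posn cd) ∧ L.length = r + s - 1 := by
  obtain ⟨L₁, hL₁, hlen₁⟩ := he
  obtain ⟨L₂, hL₂, hlen₂⟩ := hs
  refine ⟨L₁ ++ ((i,cs) :: L₂), ?_, by simp; omega⟩
  rw [List.pairwise_append]
  refine ⟨(List.pairwise_append.1 hL₁).1, hL₂, ?_⟩
  intro a ha b hb
  have hai : Rrel posn cd a (i,ce) := endCh_last hL₁ a ha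
  have hai' : Rrel posn cd a (i,cs) := ⟨hai.1, lt_trans hcd hai.2⟩
  rcases List.mem_cons.1 hb with h' | h'
  · subst h'; exact hai'
  · exact hai'.trans (startCh_head hL₂ b h')

/-- glue an ending chain at `(i,ce)` with a starting chain at `(j,cs)` when
`Rrel (i,ce) (j,cs)`. -/
theorem glue_two {i j : ι} {ce cs : Bool} {r s : ℕ}
    (he : EndCh posn cd i ce r) (hs : StartCh posn cd j cs s)
    (hR : Rrel posn cd (i,ce) (j,cs)) :
    ∃ L : List (ι × Bool), L.Pairwise (Rrel posn cd) ∧ L.length = r + s := by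
  obtain ⟨L₁, hL₁, hlen₁⟩ := he
  obtain ⟨L₂, hL₂, hlen₂⟩ := hs
  refine ⟨(L₁ ++ [(i,ce)]) ++ ((j,cs) :: L₂), ?_, by simp; omega⟩
  rw [List.pairwise_append]
  refine ⟨hL₁, hL₂, ?_⟩
  intro a ha b hb
  have hai : Rrel posn cd a (j,cs) := by
    rcases List.mem_append.1 ha with h' | h'
    · exact ((endCh_last hL₁ a h').trans hR)
    · simp only [List.mem_singleton] at h'
      subst h'; exact hR
  rcases List.mem_cons.1 hb with h' | h'
  · subst h'; exact hai
  · exact hai.trans (startCh_head hL₂ b h')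



variable {α : Type*}

theorem splice (W : List α) {a b c : ℕ} (hab : a ≤ b) (hbc : b ≤ c) :
    (W.drop a).take (b - a) ++ (W.drop b).take (c - b) = (W.drop a).take (c - a) := by
  have h1 : c - a = (b - a) + (c - b) := by omega
  have h2 : (W.drop a).drop (b - a) = W.drop b := by
    rw [List.drop_drop]
    congr 1
    omega
  rw [h1, List.take_add, h2]

theorem flatten_seg (W : List α) :
    ∀ (t : ℕ) (Q : Fin (t+1) → ℕ), (∀ a b : Fin (t+1), a ≤ b → Q a ≤ Q b) →
    (List.ofFn fun k : Fin t =>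
        (W.drop (Q k.castSucc)).take (Q k.succ - Q k.castSucc)).flatten
      = (W.drop (Q 0)).take (Q (Fin.last t) - Q 0) := by
  intro t
  induction t with
  | zero =>
      intro Q _
      have : Fin.last 0 = 0 := rfl
      simp [this]
  | succ t ih =>
      intro Q hmono
      rw [List.ofFn_succ, List.flatten_cons]
      have hfuneq : (fun k : Fin t =>
          (W.drop (Q (k.succ).castSucc)).take (Q (k.succ).succ - Q (k.succ).castSucc))
          = (fun k : Fin t =>
          (W.drop ((Q ∘ Fin.succ) k.castSucc)).take ((Q ∘ Fin.succ) k.succ - (Q ∘ Fin.succ) k.castSucc)) := by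
        funext k
        simp only [Function.comp_apply]
        rw [Fin.succ_castSucc]
      rw [hfuneq, ih (Q ∘ Fin.succ) (fun a b hab => hmono _ _ (by
        simpa [Fin.succ_le_succ_iff] using hab))]
      simp only [Function.comp_apply]
      have h0 : (0 : Fin (t+1)).castSucc = (0 : Fin (t+2)) := rfl
      have hlast : (Fin.last t).succ = Fin.last (t+1) := Fin.succ_last t
      rw [h0, hlast]
      apply splice
      · exact hmono _ _ (by simp [Fin.le_def])
      · exact hmono _ _ (by simp [Fin.le_def] <;> omega)



variable {ι : Type*} [DecidableEq ι]

/-- Rules for the three-label sequences: lab=1 is "V", lab=2 is "W",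
anything else is "M". -/
def Rule (posn X Y : ι → ℕ) (lab : ι → ℕ) (i j : ι) : Prop :=
  (lab i = 1 → Y i ≤ X j) ∧
  (lab j = 2 → Y i ≤ X j) ∧
  (lab i ≠ 1 → lab i ≠ 2 → lab j ≠ 1 → lab j ≠ 2 →
      X i ≤ X j ∧ Y i ≤ Y j ∧ ¬(X i = X j ∧ Y i = Y j)) ∧
  (lab i = 2 → lab j ≠ 1 → lab j ≠ 2 → (Y i < Y j ∨ (Y i = Y j ∧ X i < X j))) ∧
  (lab i ≠ 1 → lab i ≠ 2 → lab j = 1 → (X i < X j ∨ (X i = X j ∧ Y i < Y j)))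


theorem card_le_Icc (S' : Finset ι) (f : ι → ℕ) (lo hi : ℕ)
    (hmem : ∀ v ∈ S', lo ≤ f v ∧ f v ≤ hi)
    (hinj : ∀ v ∈ S', ∀ w ∈ S', v ≠ w → f v ≠ f w) :
    S'.card ≤ hi + 1 - lo := by
  have : S'.card ≤ (Finset.Icc lo hi).card := by
    apply Finset.card_le_card_of_injOn f
    · intro v hv; simp only [Finset.mem_coe, Finset.mem_Icc]; exact hmem v hv
    · intro v hv w hw hfvw
      by_contra hne
      exact hinj v hv w hw hne hfvw
  simpa [Nat.card_Icc] using this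

theorem keyAux (l : ℕ) (posn X Y : ι → ℕ) (lab : ι → ℕ) :
    ∀ (C : ℕ) (S : Finset ι), S.card = C →
    (∀ i ∈ S, ∀ j ∈ S, posn i = posn j → i = j) →
    (∀ i ∈ S, X i < Y i ∧ Y i < l) →
    (∀ i ∈ S, ∀ j ∈ S, posn i < posn j → Rule posn X Y lab i j) →
    ∀ (X0 Y0 : ℕ), X0 < Y0 → Y0 < l →
    (∀ j ∈ S,
      (lab j = 1 → (X0 < X j ∨ (X0 = X j ∧ Y0 < Y j))) ∧
      (lab j = 2 → Y0 ≤ X j) ∧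
      (lab j ≠ 1 → lab j ≠ 2 → X0 ≤ X j ∧ Y0 ≤ Y j ∧ ¬(X0 = X j ∧ Y0 = Y j))) →
    S.card ≤ (l - 1 - X0) + (l - 1 - Y0) := by
  intro C
  induction C using Nat.strong_induction_on with
  | _ C IH =>
  intro S hC hinj hb hrule X0 Y0 hXY0 hY0l hsent
  classical
  set FM : Finset ι := S.filter (fun i => lab i ≠ 1 ∧ lab i ≠ 2) with hFM
  by_cases hFMe : FM = ∅
  · -- no M elements: only V's and W's
    set FV : Finset ι := S.filter (fun i => lab i = 1) with hFV
    set FW : Finset ι := S.filter (fun i => lab i = 2) with hFWd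
    have hSsplit : S.card ≤ FV.card + FW.card := by
      have : S ⊆ FV ∪ FW := by
        intro i hi
        rcases eq_or_ne (lab i) 1 with h1 | h1
        · exact Finset.mem_union_left _ (Finset.mem_filter.2 ⟨hi, h1⟩)
        rcases eq_or_ne (lab i) 2 with h2 | h2
        · exact Finset.mem_union_right _ (Finset.mem_filter.2 ⟨hi, h2⟩)
        · exfalso
          have : i ∈ FM := Finset.mem_filter.2 ⟨hi, h1, h2⟩
          simp [hFMe] at this
      calc S.card ≤ (FV ∪ FW).card := Finset.card_le_card this
        _ ≤ FV.card + FW.card := Finset.card_union_le _ _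
    have hV : FV.card ≤ l - 1 - X0 := by
      have := card_le_Icc FV X X0 (l - 2) ?hmem ?hinj
      · calc FV.card ≤ (l-2) + 1 - X0 := this
          _ ≤ l - 1 - X0 := by omega
      case hmem =>
        intro v hv
        obtain ⟨hvS, hv1⟩ := Finset.mem_filter.1 hv
        have hbv := hb v hvS
        have hsv := (hsent v hvS).1 hv1
        constructor
        · rcases hsv with h | ⟨h, -⟩ <;> omega
        · omega
      case hinj =>
        intro v hv w hw hvw
        obtain ⟨hvS, hv1⟩ := Finset.mem_filter.1 hv
        obtain ⟨hwS, hw1⟩ := Finset.mem_filter.1 hw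
        have hpne : posn v ≠ posn w := fun h => hvw (hinj v hvS w hwS h)
        rcases Nat.lt_or_ge (posn v) (posn w) with h | h
        · have h2 := ((hrule v hvS w hwS h).1 hv1)
          have h3 := (hb v hvS).1
          omega
        · have hlt : posn w < posn v := by omega
          have h2 := ((hrule w hwS v hvS hlt).1 hw1)
          have h3 := (hb w hwS).1
          omega
    have hW : FW.card ≤ l - 1 - Y0 := by
      have := card_le_Icc FW Y (Y0+1) (l - 1) ?hmem ?hinj
      · calc FW.card ≤ (l-1) + 1 - (Y0+1) := this
          _ ≤ l - 1 - Y0 := by omega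
      case hmem =>
        intro v hv
        obtain ⟨hvS, hv2⟩ := Finset.mem_filter.1 hv
        have hbv := hb v hvS
        have hsv := (hsent v hvS).2.1 hv2
        omega
      case hinj =>
        intro v hv w hw hvw
        obtain ⟨hvS, hv2⟩ := Finset.mem_filter.1 hv
        obtain ⟨hwS, hw2⟩ := Finset.mem_filter.1 hw
        have hpne : posn v ≠ posn w := fun h => hvw (hinj v hvS w hwS h)
        rcases Nat.lt_or_ge (posn v) (posn w) with h | h
        · have h2 := ((hrule v hvS w hwS h).2.1 hw2)
          have h3 := (hb v hvS).1
          have h4 := (hb w hwS).1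
          omega
        · have hlt : posn w < posn v := by omega
          have h2 := ((hrule w hwS v hvS hlt).2.1 hv2)
          have h3 := (hb v hvS).1
          have h4 := (hb w hwS).1
          omega
    omega
  · -- FM nonempty
    have hFMne : FM.Nonempty := Finset.nonempty_of_ne_empty hFMe
    obtain ⟨m, hmFM, hmin⟩ := Finset.exists_min_image FM posn hFMne
    obtain ⟨hmS, hm12⟩ := Finset.mem_filter.1 hmFM
    obtain ⟨hm1, hm2⟩ := hm12
    have hbm := hb m hmS
    have hsm := (hsent m hmS).2.2 hm1 hm2
    set SP : Finset ι := S.filter (fun i => posn i < posn m) with hSPdef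
    set SS : Finset ι := S.filter (fun i => posn m < posn i) with hSSdef
    have hmnotSP : m ∉ SP := by simp [hSPdef]
    have hmnotSS : m ∉ SS := by simp [hSSdef]
    have hScard : S.card = SP.card + SS.card + 1 := by
      have hdisj : Disjoint SP SS := by
        rw [Finset.disjoint_left]
        intro i hi hi'
        have h1 := (Finset.mem_filter.1 hi).2
        have h2 := (Finset.mem_filter.1 hi').2
        omega
      have hdisj2 : Disjoint (SP ∪ SS) {m} := by
        rw [Finset.disjoint_right]
        intro i hi
        simp only [Finset.mem_singleton] at hi
        subst hi
        intro hmem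
        rcases Finset.mem_union.1 hmem with h | h
        · exact hmnotSP h
        · exact hmnotSS h
      have hSeq : S = (SP ∪ SS) ∪ {m} := by
        apply Finset.ext
        intro i
        constructor
        · intro hi
          rcases Nat.lt_trichotomy (posn i) (posn m) with h | h | h
          · exact Finset.mem_union_left _ (Finset.mem_union_left _
              (Finset.mem_filter.2 ⟨hi, h⟩))
          · have : i = m := hinj i hi m hmS h
            subst this
            exact Finset.mem_union_right _ (Finset.mem_singleton_self _)
          · exact Finset.mem_union_left _ (Finset.mem_union_right _
              (Finset.mem_filter.2 ⟨hi, h⟩))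
        · intro hi
          rcases Finset.mem_union.1 hi with h | h
          · rcases Finset.mem_union.1 h with h' | h'
            · exact (Finset.mem_filter.1 h').1
            · exact (Finset.mem_filter.1 h').1
          · simp only [Finset.mem_singleton] at h
            subst h; exact hmS
      rw [hSeq, Finset.card_union_of_disjoint hdisj2,
        Finset.card_union_of_disjoint hdisj, Finset.card_singleton]
    -- SP contains no M elements
    have hSPnoM : ∀ i ∈ SP, lab i = 1 ∨ lab i = 2 := by
      intro i hi
      obtain ⟨hiS, hilt⟩ := Finset.mem_filter.1 hi
      by_contra hcon
      push_neg at hcon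
      have : i ∈ FM := Finset.mem_filter.2 ⟨hiS, hcon.1, hcon.2⟩
      have := hmin i this
      omega
    set SPV : Finset ι := SP.filter (fun i => lab i = 1) with hSPVdef
    set SPW : Finset ι := SP.filter (fun i => lab i = 2) with hSPWdef
    have hSPcover : SP.card ≤ SPV.card + SPW.card := by
      have : SP ⊆ SPV ∪ SPW := by
        intro i hi
        rcases hSPnoM i hi with h | h
        · exact Finset.mem_union_left _ (Finset.mem_filter.2 ⟨hi, h⟩)
        · exact Finset.mem_union_right _ (Finset.mem_filter.2 ⟨hi, h⟩)
      calc SP.card ≤ (SPV ∪ SPW).card := Finset.card_le_card this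
        _ ≤ SPV.card + SPW.card := Finset.card_union_le _ _
    -- facts for SPW members
    have hSPWfact : ∀ w ∈ SPW, Y0 + 1 ≤ Y w ∧ Y w ≤ Y m ∧ (Y w = Y m → X w < X m) := by
      intro w hw
      obtain ⟨hwSP, hw2⟩ := Finset.mem_filter.1 hw
      obtain ⟨hwS, hwlt⟩ := Finset.mem_filter.1 hwSP
      have hbw := hb w hwS
      have hs := (hsent w hwS).2.1 hw2
      have hr := (hrule w hwS m hmS hwlt).2.2.2.1 hw2 hm1 hm2
      refine ⟨by omega, ?_, ?_⟩
      · rcases hr with h | ⟨h, -⟩ <;> omega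
      · intro hYeq
        rcases hr with h | ⟨-, h⟩ <;> omega
    have hSPWinj : ∀ v ∈ SPW, ∀ w ∈ SPW, v ≠ w → Y v ≠ Y w := by
      intro v hv w hw hvw
      obtain ⟨hvSP, hv2⟩ := Finset.mem_filter.1 hv
      obtain ⟨hvS, -⟩ := Finset.mem_filter.1 hvSP
      obtain ⟨hwSP, hw2⟩ := Finset.mem_filter.1 hw
      obtain ⟨hwS, -⟩ := Finset.mem_filter.1 hwSP
      have hpne : posn v ≠ posn w := fun h => hvw (hinj v hvS w hwS h)
      rcases Nat.lt_or_ge (posn v) (posn w) with h | h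
      · have h2 := (hrule v hvS w hwS h).2.1 hw2
        have h3 := (hb v hvS).1
        have h4 := (hb w hwS).1
        omega
      · have hlt : posn w < posn v := by omega
        have h2 := (hrule w hwS v hvS hlt).2.1 hv2
        have h3 := (hb w hwS).1
        have h4 := (hb v hvS).1
        omega
    have hSPW : SPW.card ≤ Y m - Y0 := by
      have := card_le_Icc SPW Y (Y0+1) (Y m)
        (fun v hv => ⟨(hSPWfact v hv).1, (hSPWfact v hv).2.1⟩) hSPWinj
      omega
    -- facts for SPV members
    have hSPVfact : ∀ w ∈ SPV, X0 ≤ X w ∧ Y w ≤ X m ∧ (X0 = X w → Y0 < Y w) := by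
      intro w hw
      obtain ⟨hwSP, hw1⟩ := Finset.mem_filter.1 hw
      obtain ⟨hwS, hwlt⟩ := Finset.mem_filter.1 hwSP
      have hs := (hsent w hwS).1 hw1
      have hr := (hrule w hwS m hmS hwlt).1 hw1
      refine ⟨?_, hr, ?_⟩
      · rcases hs with h | ⟨h, -⟩ <;> omega
      · intro hXeq
        rcases hs with h | ⟨-, h⟩ <;> omega
    have hSPVstack : ∀ v ∈ SPV, ∀ w ∈ SPV, posn v < posn w → Y v ≤ X w := by
      intro v hv w hw hlt
      obtain ⟨hvSP, hv1⟩ := Finset.mem_filter.1 hv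
      obtain ⟨hvS, -⟩ := Finset.mem_filter.1 hvSP
      obtain ⟨hwSP, -⟩ := Finset.mem_filter.1 hw
      obtain ⟨hwS, -⟩ := Finset.mem_filter.1 hwSP
      exact (hrule v hvS w hwS hlt).1 hv1
    have hSPVmemS : ∀ v ∈ SPV, v ∈ S := by
      intro v hv
      exact (Finset.mem_filter.1 ((Finset.mem_filter.1 hv).1)).1
    -- main inequality for the prefix
    have hkey : SP.card + 1 ≤ (X m - X0) + (Y m - Y0) := by
      rcases Finset.eq_empty_or_nonempty SPV with hVe | hVne
      · -- no V's before m
        have hSP' : SP.card ≤ SPW.card := by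
          have := hSPcover
          rw [hVe] at this
          simpa using this
        rcases Nat.lt_or_ge X0 (X m) with hXm | hXm
        · omega
        · -- X m = X0 : no w with Y w = Y m
          have hXmeq : X m = X0 := by omega
          have hYm : Y0 + 1 ≤ Y m := by
            rcases hsm with ⟨h1, h2, h3⟩
            omega
          have hSPW' : SPW.card ≤ Y m - 1 - Y0 := by
            have := card_le_Icc SPW Y (Y0+1) (Y m - 1) ?mem hSPWinj
            · omega
            case mem =>
              intro v hv
              have hf := hSPWfact v hv
              obtain ⟨hvSP, hv2⟩ := Finset.mem_filter.1 hv
              obtain ⟨hvS, -⟩ := Finset.mem_filter.1 hvSP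
              have hsv := (hsent v hvS).2.1 hv2
              constructor
              · omega
              · -- Y v ≤ Y m - 1
                rcases Nat.lt_or_ge (Y v) (Y m) with h | h
                · omega
                · exfalso
                  have hYeq : Y v = Y m := by omega
                  have := hf.2.2 hYeq
                  omega
          omega
      · -- some V before m; take the one with least position
        obtain ⟨v₀, hv₀SPV, hv₀min⟩ := Finset.exists_min_image SPV posn hVne
        have hv₀S : v₀ ∈ S := hSPVmemS v₀ hv₀SPV
        have hbv₀ := hb v₀ hv₀S
        have hfv₀ := hSPVfact v₀ hv₀SPV
        have hothers : ∀ w ∈ SPV, w ≠ v₀ → Y v₀ ≤ X w := by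
          intro w hw hne
          have hwS := hSPVmemS w hw
          have hple := hv₀min w hw
          have hlt : posn v₀ < posn w := by
            rcases Nat.lt_or_ge (posn v₀) (posn w) with h | h
            · exact h
            · have heq : posn v₀ = posn w := by omega
              exact absurd (hinj w hwS v₀ hv₀S heq.symm) hne
          exact hSPVstack v₀ hv₀SPV w hw hlt
        have hSPVerase_inj : ∀ v ∈ SPV.erase v₀, ∀ w ∈ SPV.erase v₀, v ≠ w → X v ≠ X w := by
          intro v hv w hw hvw
          have hv' := Finset.mem_of_mem_erase hv
          have hw' := Finset.mem_of_mem_erase hw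
          have hvS := hSPVmemS v hv'
          have hwS := hSPVmemS w hw'
          have hpne : posn v ≠ posn w := fun h => hvw (hinj v hvS w hwS h)
          rcases Nat.lt_or_ge (posn v) (posn w) with h | h
          · have h2 := hSPVstack v hv' w hw' h
            have h3 := (hb v hvS).1
            omega
          · have hlt : posn w < posn v := by omega
            have h2 := hSPVstack w hw' v hv' hlt
            have h3 := (hb w hwS).1
            omega
        have hSPVcard : SPV.card = (SPV.erase v₀).card + 1 := by
          rw [Finset.card_erase_of_mem hv₀SPV]
          have : 1 ≤ SPV.card := Finset.card_pos.2 hVne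
          omega
        rcases Nat.eq_or_lt_of_le hfv₀.1 with hx0 | hx0
        · -- X v₀ = X0, so Y v₀ ≥ Y0 + 1 and others start at Y v₀
          have hYv₀ : Y0 + 1 ≤ Y v₀ := by
            have := hfv₀.2.2 hx0
            omega
          have herase : (SPV.erase v₀).card ≤ (X m - 1) + 1 - (Y0 + 1) := by
            apply card_le_Icc _ X (Y0+1) (X m - 1) ?mem hSPVerase_inj
            case mem =>
              intro v hv
              have hv' := Finset.mem_of_mem_erase hv
              have hne := Finset.ne_of_mem_erase hv
              have h1 := hothers v hv' hne
              have h2 := (hSPVfact v hv').2.1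
              have h3 := (hb v (hSPVmemS v hv')).1
              omega
          have hXmv : Y v₀ ≤ X m := hfv₀.2.1
          omega
        · -- X0 < X v₀
          have hall : SPV.card ≤ (X m - 1) + 1 - (X0 + 1) := by
            apply card_le_Icc _ X (X0+1) (X m - 1) ?mem
            · intro v hv w hw hvw
              have hvS := hSPVmemS v hv
              have hwS := hSPVmemS w hw
              have hpne : posn v ≠ posn w := fun h => hvw (hinj v hvS w hwS h)
              rcases Nat.lt_or_ge (posn v) (posn w) with h | h
              · have h2 := hSPVstack v hv w hw h
                have h3 := (hb v hvS).1
                omega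
              · have hlt : posn w < posn v := by omega
                have h2 := hSPVstack w hw v hv hlt
                have h3 := (hb w hwS).1
                omega
            case mem =>
              intro v hv
              have h2 := (hSPVfact v hv).2.1
              have h3 := (hb v (hSPVmemS v hv)).1
              rcases eq_or_ne v v₀ with hveq | hvne
              · subst hveq
                omega
              · have h1 := hothers v hv hvne
                omega
          have hXmv : Y v₀ ≤ X m := hfv₀.2.1
          omega
    -- recursive bound on SS
    have hSS : SS.card ≤ (l - 1 - X m) + (l - 1 - Y m) := by
      have hSSsub : SS ⊆ S := Finset.filter_subset _ _
      have hSSlt : SS.card < C := by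
        rw [← hC]
        apply Finset.card_lt_card
        constructor
        · exact hSSsub
        · intro hsub
          exact hmnotSS (hsub hmS)
      apply IH SS.card hSSlt SS rfl
      · intro i hi j hj hp
        exact hinj i (hSSsub hi) j (hSSsub hj) hp
      · intro i hi; exact hb i (hSSsub hi)
      · intro i hi j hj hp
        exact hrule i (hSSsub hi) j (hSSsub hj) hp
      · exact hbm.1
      · exact hbm.2
      · intro j hj
        obtain ⟨hjS, hjlt⟩ := Finset.mem_filter.1 hj
        have hr := hrule m hmS j hjS hjlt
        refine ⟨?_, ?_, ?_⟩
        · intro hj1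
          exact hr.2.2.2.2 hm1 hm2 hj1
        · intro hj2
          exact hr.2.1 hj2
        · intro hj1 hj2
          exact hr.2.2.1 hm1 hm2 hj1 hj2
    -- combine
    have h1 : X0 ≤ X m := hsm.1
    have h2 : Y0 ≤ Y m := hsm.2.1
    omega

theorem key (l : ℕ) (posn X Y : ι → ℕ) (lab : ι → ℕ) (S : Finset ι)
    (hinj : ∀ i ∈ S, ∀ j ∈ S, posn i = posn j → i = j)
    (hb : ∀ i ∈ S, X i < Y i ∧ Y i < l)
    (hrule : ∀ i ∈ S, ∀ j ∈ S, posn i < posn j → Rule posn X Y lab i j) :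
    S.card ≤ 2 * l - 1 := by
  classical
  set FM : Finset ι := S.filter (fun i => lab i ≠ 1 ∧ lab i ≠ 2) with hFM
  by_cases hFMe : FM = ∅
  · -- only V's and W's
    set FV : Finset ι := S.filter (fun i => lab i = 1) with hFV
    set FW : Finset ι := S.filter (fun i => lab i = 2) with hFWd
    have hSsplit : S.card ≤ FV.card + FW.card := by
      have : S ⊆ FV ∪ FW := by
        intro i hi
        rcases eq_or_ne (lab i) 1 with h1 | h1
        · exact Finset.mem_union_left _ (Finset.mem_filter.2 ⟨hi, h1⟩)
        rcases eq_or_ne (lab i) 2 with h2 | h2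
        · exact Finset.mem_union_right _ (Finset.mem_filter.2 ⟨hi, h2⟩)
        · exfalso
          have : i ∈ FM := Finset.mem_filter.2 ⟨hi, h1, h2⟩
          simp [hFMe] at this
      calc S.card ≤ (FV ∪ FW).card := Finset.card_le_card this
        _ ≤ FV.card + FW.card := Finset.card_union_le _ _
    rcases Nat.lt_or_ge l 2 with hl0 | hlpos
    · -- l ≤ 1 : no elements possible
      have : S = ∅ := by
        apply Finset.eq_empty_of_forall_notMem
        intro i hi
        have := hb i hi
        omega
      simp [this]
    have hV : FV.card ≤ l - 1 := by
      have := card_le_Icc FV X 0 (l - 2) ?hmem ?hinj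
      · omega
      case hmem =>
        intro v hv
        obtain ⟨hvS, -⟩ := Finset.mem_filter.1 hv
        have hbv := hb v hvS
        omega
      case hinj =>
        intro v hv w hw hvw
        obtain ⟨hvS, hv1⟩ := Finset.mem_filter.1 hv
        obtain ⟨hwS, hw1⟩ := Finset.mem_filter.1 hw
        have hpne : posn v ≠ posn w := fun h => hvw (hinj v hvS w hwS h)
        rcases Nat.lt_or_ge (posn v) (posn w) with h | h
        · have h2 := ((hrule v hvS w hwS h).1 hv1)
          have h3 := (hb v hvS).1
          omega
        · have hlt : posn w < posn v := by omega
          have h2 := ((hrule w hwS v hvS hlt).1 hw1)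
          have h3 := (hb w hwS).1
          omega
    have hW : FW.card ≤ l - 1 := by
      have := card_le_Icc FW Y 1 (l - 1) ?hmem ?hinj
      · omega
      case hmem =>
        intro v hv
        obtain ⟨hvS, -⟩ := Finset.mem_filter.1 hv
        have hbv := hb v hvS
        omega
      case hinj =>
        intro v hv w hw hvw
        obtain ⟨hvS, hv2⟩ := Finset.mem_filter.1 hv
        obtain ⟨hwS, hw2⟩ := Finset.mem_filter.1 hw
        have hpne : posn v ≠ posn w := fun h => hvw (hinj v hvS w hwS h)
        rcases Nat.lt_or_ge (posn v) (posn w) with h | h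
        · have h2 := ((hrule v hvS w hwS h).2.1 hw2)
          have h3 := (hb v hvS).1
          have h4 := (hb w hwS).1
          omega
        · have hlt : posn w < posn v := by omega
          have h2 := ((hrule w hwS v hvS hlt).2.1 hv2)
          have h3 := (hb w hwS).1
          have h4 := (hb v hvS).1
          omega
    omega
  · -- there is an M element; take the earliest one
    have hFMne : FM.Nonempty := Finset.nonempty_of_ne_empty hFMe
    obtain ⟨m, hmFM, hmin⟩ := Finset.exists_min_image FM posn hFMne
    obtain ⟨hmS, hm12⟩ := Finset.mem_filter.1 hmFM
    obtain ⟨hm1, hm2⟩ := hm12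
    have hbm := hb m hmS
    set SP : Finset ι := S.filter (fun i => posn i < posn m) with hSPdef
    set SS : Finset ι := S.filter (fun i => posn m < posn i) with hSSdef
    have hmnotSP : m ∉ SP := by simp [hSPdef]
    have hmnotSS : m ∉ SS := by simp [hSSdef]
    have hScard : S.card = SP.card + SS.card + 1 := by
      have hdisj : Disjoint SP SS := by
        rw [Finset.disjoint_left]
        intro i hi hi'
        have h1 := (Finset.mem_filter.1 hi).2
        have h2 := (Finset.mem_filter.1 hi').2
        omega
      have hdisj2 : Disjoint (SP ∪ SS) {m} := by
        rw [Finset.disjoint_right]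
        intro i hi
        simp only [Finset.mem_singleton] at hi
        subst hi
        intro hmem
        rcases Finset.mem_union.1 hmem with h | h
        · exact hmnotSP h
        · exact hmnotSS h
      have hSeq : S = (SP ∪ SS) ∪ {m} := by
        apply Finset.ext
        intro i
        constructor
        · intro hi
          rcases Nat.lt_trichotomy (posn i) (posn m) with h | h | h
          · exact Finset.mem_union_left _ (Finset.mem_union_left _
              (Finset.mem_filter.2 ⟨hi, h⟩))
          · have : i = m := hinj i hi m hmS h
            subst this
            exact Finset.mem_union_right _ (Finset.mem_singleton_self _)
          · exact Finset.mem_union_left _ (Finset.mem_union_right _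
              (Finset.mem_filter.2 ⟨hi, h⟩))
        · intro hi
          rcases Finset.mem_union.1 hi with h | h
          · rcases Finset.mem_union.1 h with h' | h'
            · exact (Finset.mem_filter.1 h').1
            · exact (Finset.mem_filter.1 h').1
          · simp only [Finset.mem_singleton] at h
            subst h; exact hmS
      rw [hSeq, Finset.card_union_of_disjoint hdisj2,
        Finset.card_union_of_disjoint hdisj, Finset.card_singleton]
    have hSPnoM : ∀ i ∈ SP, lab i = 1 ∨ lab i = 2 := by
      intro i hi
      obtain ⟨hiS, hilt⟩ := Finset.mem_filter.1 hi
      by_contra hcon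
      push_neg at hcon
      have : i ∈ FM := Finset.mem_filter.2 ⟨hiS, hcon.1, hcon.2⟩
      have := hmin i this
      omega
    set SPV : Finset ι := SP.filter (fun i => lab i = 1) with hSPVdef
    set SPW : Finset ι := SP.filter (fun i => lab i = 2) with hSPWdef
    have hSPcover : SP.card ≤ SPV.card + SPW.card := by
      have : SP ⊆ SPV ∪ SPW := by
        intro i hi
        rcases hSPnoM i hi with h | h
        · exact Finset.mem_union_left _ (Finset.mem_filter.2 ⟨hi, h⟩)
        · exact Finset.mem_union_right _ (Finset.mem_filter.2 ⟨hi, h⟩)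
      calc SP.card ≤ (SPV ∪ SPW).card := Finset.card_le_card this
        _ ≤ SPV.card + SPW.card := Finset.card_union_le _ _
    have hSPV : SPV.card ≤ X m := by
      have := card_le_Icc SPV X 0 (X m - 1) ?hmem ?hinj
      · rcases Nat.eq_zero_or_pos (X m) with h0 | hp
        · -- X m = 0 : SPV must be empty since X v < Y v ≤ X m
          have : SPV = ∅ := by
            apply Finset.eq_empty_of_forall_notMem
            intro v hv
            obtain ⟨hvSP, hv1⟩ := Finset.mem_filter.1 hv
            obtain ⟨hvS, hvlt⟩ := Finset.mem_filter.1 hvSP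
            have h2 := (hrule v hvS m hmS hvlt).1 hv1
            have h3 := (hb v hvS).1
            omega
          simp [this]
        · omega
      case hmem =>
        intro v hv
        obtain ⟨hvSP, hv1⟩ := Finset.mem_filter.1 hv
        obtain ⟨hvS, hvlt⟩ := Finset.mem_filter.1 hvSP
        have h2 := (hrule v hvS m hmS hvlt).1 hv1
        have h3 := (hb v hvS).1
        omega
      case hinj =>
        intro v hv w hw hvw
        obtain ⟨hvSP, hv1⟩ := Finset.mem_filter.1 hv
        obtain ⟨hvS, -⟩ := Finset.mem_filter.1 hvSP
        obtain ⟨hwSP, hw1⟩ := Finset.mem_filter.1 hw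
        obtain ⟨hwS, -⟩ := Finset.mem_filter.1 hwSP
        have hpne : posn v ≠ posn w := fun h => hvw (hinj v hvS w hwS h)
        rcases Nat.lt_or_ge (posn v) (posn w) with h | h
        · have h2 := (hrule v hvS w hwS h).1 hv1
          have h3 := (hb v hvS).1
          omega
        · have hlt : posn w < posn v := by omega
          have h2 := (hrule w hwS v hvS hlt).1 hw1
          have h3 := (hb w hwS).1
          omega
    have hSPW : SPW.card ≤ Y m := by
      have := card_le_Icc SPW Y 1 (Y m) ?hmem ?hinj
      · omega
      case hmem =>
        intro v hv
        obtain ⟨hvSP, hv2⟩ := Finset.mem_filter.1 hv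
        obtain ⟨hvS, hvlt⟩ := Finset.mem_filter.1 hvSP
        have h2 := (hrule v hvS m hmS hvlt).2.2.2.1 hv2 hm1 hm2
        have h3 := (hb v hvS).1
        rcases h2 with h | ⟨h, -⟩ <;> omega
      case hinj =>
        intro v hv w hw hvw
        obtain ⟨hvSP, hv2⟩ := Finset.mem_filter.1 hv
        obtain ⟨hvS, -⟩ := Finset.mem_filter.1 hvSP
        obtain ⟨hwSP, hw2⟩ := Finset.mem_filter.1 hw
        obtain ⟨hwS, -⟩ := Finset.mem_filter.1 hwSP
        have hpne : posn v ≠ posn w := fun h => hvw (hinj v hvS w hwS h)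
        rcases Nat.lt_or_ge (posn v) (posn w) with h | h
        · have h2 := (hrule v hvS w hwS h).2.1 hw2
          have h3 := (hb v hvS).1
          have h4 := (hb w hwS).1
          omega
        · have hlt : posn w < posn v := by omega
          have h2 := (hrule w hwS v hvS hlt).2.1 hv2
          have h3 := (hb w hwS).1
          have h4 := (hb v hvS).1
          omega
    have hSS : SS.card ≤ (l - 1 - X m) + (l - 1 - Y m) := by
      have hSSsub : SS ⊆ S := Finset.filter_subset _ _
      apply keyAux l posn X Y lab SS.card SS rfl
      · intro i hi j hj hp
        exact hinj i (hSSsub hi) j (hSSsub hj) hp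
      · intro i hi; exact hb i (hSSsub hi)
      · intro i hi j hj hp
        exact hrule i (hSSsub hi) j (hSSsub hj) hp
      · exact hbm.1
      · exact hbm.2
      · intro j hj
        obtain ⟨hjS, hjlt⟩ := Finset.mem_filter.1 hj
        have hr := hrule m hmS j hjS hjlt
        refine ⟨?_, ?_, ?_⟩
        · intro hj1
          exact hr.2.2.2.2 hm1 hm2 hj1
        · intro hj2
          exact hr.2.1 hj2
        · intro hj1 hj2
          exact hr.2.2.1 hm1 hm2 hj1 hj2
    omega


def wrd {l N : ℕ} (xf yf : Fin N → Fin l) (i : Fin N) (c : Bool) : List (Fin l) :=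
  if c then [yf i, xf i] else [xf i, yf i]

def cdf (l : ℕ) {N : ℕ} (xf yf : Fin N → Fin l) : Fin N × Bool → ℕ :=
  fun p => if p.2 then enc l (yf p.1 : ℕ) (xf p.1 : ℕ) else enc l (xf p.1 : ℕ) (yf p.1 : ℕ)

theorem wrd_shape {l N : ℕ} (xf yf : Fin N → Fin l) (hxy : ∀ i, xf i < yf i)
    (i : Fin N) (c : Bool) :
    ∃ a b : Fin l, wrd xf yf i c = [a, b] ∧ cdf l xf yf (i, c) = enc l (a : ℕ) (b : ℕ)
      ∧ a ≠ b := by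
  cases c
  · exact ⟨xf i, yf i, rfl, rfl, ne_of_lt (hxy i)⟩
  · exact ⟨yf i, xf i, rfl, rfl, (ne_of_lt (hxy i)).symm⟩

theorem wrd_len {l N : ℕ} (xf yf : Fin N → Fin l) (i : Fin N) (c : Bool) :
    (wrd xf yf i c).length = 2 := by
  cases c <;> simp [wrd]

theorem divisible_of_chain (l N n : ℕ) (hn : 3 ≤ n) (W : List (Fin l))
    (pos m : Fin N → ℕ) (xf yf : Fin N → Fin l) (hxy : ∀ i, xf i < yf i)
    (hgap : ∀ i j : Fin N, pos i < pos j → pos i + 2 * m i ≤ pos j)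
    (hm : ∀ i, 2 * n < m i)
    (hocc2 : ∀ (i : Fin N) (c : Bool),
      ∃ d : ℕ, d ≤ 1 ∧ OccursAt W (wpow (wrd xf yf i c) (2*n)) (pos i + d))
    (LL : List (Fin N × Bool)) (hpw : LL.Pairwise (Rrel pos (cdf l xf yf)))
    (hlen : LL.length = n) :
    StronglyNDivisible W n {z : List (Fin l) | Noncyclic z ∧ z.length = 2} := by
  classical
  choose off hoffle hocc using hocc2
  set G : Fin n → Fin N × Bool := fun k => LL.get (Fin.cast hlen.symm k) with hG
  have hGR : ∀ k k' : Fin n, k < k' → Rrel pos (cdf l xf yf) (G k) (G k') := by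
    intro k k' hkk
    apply List.pairwise_iff_get.1 hpw (Fin.cast hlen.symm k) (Fin.cast hlen.symm k')
    rw [Fin.lt_def, Fin.coe_cast, Fin.coe_cast]
    exact Fin.lt_def.1 hkk
  have plen : ∀ (i : Fin N) (c : Bool), (wpow (wrd xf yf i c) (2*n)).length = 4*n := by
    intro i c
    rw [wpow_length, wrd_len]
    omega
  set qq : Fin n → ℕ := fun k => pos (G k).1 + off (G k).1 (G k).2 with hqq
  have hqocc : ∀ k : Fin n, OccursAt W (wpow (wrd xf yf (G k).1 (G k).2) (2*n)) (qq k) :=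
    fun k => hocc (G k).1 (G k).2
  have hqW : ∀ k : Fin n, qq k + 4*n ≤ W.length := by
    intro k
    have h := (occursAt_drop (hqocc k)).2
    rwa [plen] at h
  have hqgap : ∀ k k' : Fin n, k < k' → qq k + 4*n ≤ qq k' := by
    intro k k' hkk
    have hR := hGR k k' hkk
    have h1 := hgap (G k).1 (G k').1 hR.1
    have h2 := hm (G k).1
    have h3 := hoffle (G k).1 (G k).2
    have h4 := hoffle (G k').1 (G k').2
    simp only [hqq]
    omega
  set Q : Fin (n+1) → ℕ := fun j => if h : (j : ℕ) < n then qq ⟨j, h⟩ else W.length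
    with hQ
  have hQcast : ∀ k : Fin n, Q k.castSucc = qq k := by
    intro k
    simp only [hQ, Fin.coe_castSucc]
    rw [dif_pos k.isLt]
  have hQmono : ∀ a b : Fin (n+1), a ≤ b → Q a ≤ Q b := by
    intro a b hab
    simp only [hQ]
    by_cases ha : (a : ℕ) < n
    · by_cases hb : (b : ℕ) < n
      · rw [dif_pos ha, dif_pos hb]
        rcases Nat.lt_or_ge (a : ℕ) (b : ℕ) with h | h
        · have := hqgap ⟨a, ha⟩ ⟨b, hb⟩ (Fin.mk_lt_mk.2 h)
          omega
        · have : (⟨(a : ℕ), ha⟩ : Fin n) = ⟨(b : ℕ), hb⟩ := by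
            apply Fin.ext
            show (a : ℕ) = (b : ℕ)
            simp only [Fin.le_def] at hab
            omega
          rw [this]
      · rw [dif_pos ha, dif_neg hb]
        have := hqW ⟨a, ha⟩
        omega
    · have hbn : ¬ (b : ℕ) < n := by
        simp only [Fin.le_def] at hab
        omega
      rw [dif_neg ha, dif_neg hbn]
  set f : Fin n → List (Fin l) :=
    fun k => (W.drop (Q k.castSucc)).take (Q k.succ - Q k.castSucc) with hf
  have hflat : (List.ofFn f).flatten = (W.drop (Q 0)).take (Q (Fin.last n) - Q 0) :=
    flatten_seg W n Q hQmono
  have hQlast : Q (Fin.last n) = W.length := by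
    simp only [hQ, Fin.val_last]
    rw [dif_neg (lt_irrefl n)]
  have hQ0 : Q 0 = qq ⟨0, by omega⟩ := by
    have h0 : ((0 : Fin (n+1)) : ℕ) = 0 := rfl
    simp only [hQ]
    rw [dif_pos (by rw [h0]; omega : (((0 : Fin (n+1))) : ℕ) < n)]
    rfl
  have hW0 : W = W.take (Q 0) ++ (List.ofFn f).flatten := by
    rw [hflat, hQlast]
    have hdl : (W.drop (Q 0)).length = W.length - Q 0 := List.length_drop
    have : (W.drop (Q 0)).take (W.length - Q 0) = W.drop (Q 0) := by
      apply List.take_of_length_le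
      omega
    rw [this, List.take_append_drop]
  have hgapd : ∀ k : Fin n, qq k + 4*n ≤ Q k.succ := by
    intro k
    simp only [hQ, Fin.val_succ]
    by_cases h : (k : ℕ) + 1 < n
    · rw [dif_pos h]
      exact hqgap k ⟨(k : ℕ)+1, h⟩ (Fin.lt_def.2 (Nat.lt_succ_self _))
    · rw [dif_neg h]
      exact hqW k
  have hpre : ∀ k : Fin n, wpow (wrd xf yf (G k).1 (G k).2) (2*n) <+: f k := by
    intro k
    have hdrop := (occursAt_drop (hqocc k)).1
    have hlen4 := plen (G k).1 (G k).2
    have hd : 4*n ≤ Q k.succ - qq k := by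
      have h1 := hgapd k
      omega
    simp only [hf, hQcast k, hdrop]
    set P := wpow (wrd xf yf (G k).1 (G k).2) (2*n) with hP
    set rest := W.drop (qq k + P.length) with hrest
    have hPlen : P.length = 4*n := plen _ _
    have hsplit : Q k.succ - qq k = P.length + (Q k.succ - qq k - P.length) := by
      rw [hPlen]; omega
    rw [hsplit, List.take_length_add_append]
    exact ⟨_, rfl⟩
  have hwpow_cons : ∀ (i : Fin N) (c : Bool),
      wpow (wrd xf yf i c) (2*n) = wrd xf yf i c ++ wpow (wrd xf yf i c) (2*n - 1) := by
    intro i c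
    conv_lhs => rw [show 2*n = (2*n - 1) + 1 by omega]
    exact wpow_succ _ _
  have hwpre : ∀ k : Fin n, wrd xf yf (G k).1 (G k).2 <+: f k := by
    intro k
    apply List.IsPrefix.trans _ (hpre k)
    rw [hwpow_cons]
    exact ⟨_, rfl⟩
  have hfne : ∀ k : Fin n, f k ≠ [] := by
    intro k hemp
    obtain ⟨t, ht⟩ := hpre k
    rw [hemp] at ht
    have := List.append_eq_nil_iff.1 ht
    have hlen4 := plen (G k).1 (G k).2
    rw [this.1] at hlen4
    simp at hlen4
    omega
  -- the pieces are lexicographically decreasing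
  have hWGt : ∀ k k' : Fin n, k < k' → WordGt (f k) (f k') := by
    intro k k' hkk
    obtain ⟨a, b, hab, hcd, hne⟩ := wrd_shape xf yf hxy (G k).1 (G k).2
    obtain ⟨a', b', hab', hcd', hne'⟩ := wrd_shape xf yf hxy (G k').1 (G k').2
    have hflt : cdf l xf yf (G k') < cdf l xf yf (G k) := (hGR k k' hkk).2
    have hfk := hwpre k
    have hfk' := hwpre k'
    rw [hab] at hfk
    rw [hab'] at hfk'
    apply wordGt_of_two hfk hfk'
    have henc : enc l (a' : ℕ) (b' : ℕ) < enc l (a : ℕ) (b : ℕ) := by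
      have e1 : cdf l xf yf (G k) = enc l (a : ℕ) (b : ℕ) := hcd
      have e2 : cdf l xf yf (G k') = enc l (a' : ℕ) (b' : ℕ) := hcd'
      rw [← e1, ← e2]
      exact hflt
    rcases (enc_lt_iff (b'.isLt) (b.isLt)).1 henc with h | ⟨h1, h2⟩
    · exact Or.inl (Fin.lt_def.2 h)
    · exact Or.inr ⟨Fin.ext h1, Fin.lt_def.2 h2⟩
  set zfun : Fin n → List (Fin l) := fun k => wrd xf yf (G k).1 (G k).2 with hzfun
  have hcdf_eq : ∀ k k' : Fin n, zfun k = zfun k' →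
      cdf l xf yf (G k) = cdf l xf yf (G k') := by
    intro k k' heq
    obtain ⟨a, b, hab, hcd, -⟩ := wrd_shape xf yf hxy (G k).1 (G k).2
    obtain ⟨a', b', hab', hcd', -⟩ := wrd_shape xf yf hxy (G k').1 (G k').2
    simp only [hzfun] at heq
    rw [hab, hab'] at heq
    obtain ⟨h1, h2⟩ : a = a' ∧ b = b' := by
      constructor
      · injection heq
      · have := heq
        injection this with t1 t2
        injection t2
    have e1 : cdf l xf yf (G k) = enc l (a : ℕ) (b : ℕ) := hcd
    have e2 : cdf l xf yf (G k') = enc l (a' : ℕ) (b' : ℕ) := hcd'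
    rw [e1, e2, h1, h2]
  have hzinj : Function.Injective zfun := by
    intro k k' heq
    by_contra hne
    rcases Ne.lt_or_gt hne with h | h
    · have := (hGR k k' h).2
      rw [hcdf_eq k k' heq] at this
      omega
    · have := (hGR k' k h).2
      rw [hcdf_eq k k' heq] at this
      omega
  refine ⟨W.take (Q 0), f, zfun, hW0, hfne, hWGt, ?_, hzinj⟩
  intro k
  obtain ⟨a, b, hab, -, hne⟩ := wrd_shape xf yf hxy (G k).1 (G k).2
  refine ⟨?_, ?_⟩
  · simp only [Set.mem_setOf_eq, hzfun, hab]
    exact ⟨noncyclic_pair a b hne, rfl⟩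
  · exact hpre k

theorem isRot_pair {α : Type*} (a b : α) : List.IsRotated [a,b] [b,a] :=
  ⟨1, rfl⟩

theorem rot_occ {α : Type*} {W : List α} {a b : α} {mm n p : ℕ} (hm : 2*n < mm)
    (h : OccursAt W (wpow [a,b] mm) p) :
    OccursAt W (wpow [a,b] (2*n)) p ∧ OccursAt W (wpow [b,a] (2*n)) (p+1) := by
  constructor
  · have he : wpow [a,b] mm = wpow [a,b] (2*n) ++ wpow [a,b] (mm - 2*n) := by
      rw [← wpow_add]; congr 1; omega
    rw [he] at h
    exact occursAt_prefix h
  · obtain ⟨pre, suf, hp, hW⟩ := h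
    have h1 : wpow [a,b] mm = a :: (wpow [b,a] (mm-1) ++ [b]) := by
      conv_lhs => rw [show mm = (mm-1)+1 by omega]
      exact wpow_pair_rot a b (mm-1)
    have h2 : wpow [b,a] (mm-1) = wpow [b,a] (2*n) ++ wpow [b,a] (mm-1-2*n) := by
      rw [← wpow_add]; congr 1; omega
    refine ⟨pre ++ [a], (wpow [b,a] (mm-1-2*n) ++ [b]) ++ suf, by simp [hp], ?_⟩
    rw [hW, h1, h2]
    simp

end SelAux


open SelAux

/-- Over an `l`-letter alphabet (`l ≥ 1`, `n ≥ 3`), if `W` is not strongly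
`n`-divisible over the set of noncyclic words of length 2, then any family of
pairwise disjoint occurrences in `W` of subwords `z^m` with `z` noncyclic of
length 2, `m > 2n`, and pairwise non-rotation-equivalent periods, has at most
`(2l−1)(n−1)(n−2)/2` members. -/
theorem selective_height_period_two_upper (l n : ℕ) (hl : 1 ≤ l) (hn : 3 ≤ n)
    (W : List (Fin l)) (hW : W ≠ [])
    (hndiv : ¬ StronglyNDivisible W n {z : List (Fin l) | Noncyclic z ∧ z.length = 2})
    (N : ℕ) (z : Fin N → List (Fin l)) (m : Fin N → ℕ) (pos : Fin N → ℕ)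
    (hz : ∀ i, Noncyclic (z i) ∧ (z i).length = 2)
    (hm : ∀ i, 2 * n < m i)
    (hocc : ∀ i, OccursAt W (wpow (z i) (m i)) (pos i))
    (hdisj : ∀ i j, i ≠ j →
      pos i + (wpow (z i) (m i)).length ≤ pos j ∨
      pos j + (wpow (z j) (m j)).length ≤ pos i)
    (hrot : ∀ i j, i ≠ j → ¬ List.IsRotated (z i) (z j)) :
    N ≤ (2 * l - 1) * (n - 1) * (n - 2) / 2 := by
  classical
  -- extract the two distinct letters of each period
  have hletters : ∀ i : Fin N, ∃ a b : Fin l, a < b ∧ (z i = [a,b] ∨ z i = [b,a]) := by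
    intro i
    obtain ⟨hnc, hlen2⟩ := hz i
    obtain ⟨p, q, hpq⟩ := exists_pair_of_len2 (z i) hlen2
    have hne : p ≠ q := by
      intro h
      subst h
      exact hnc.2 [p] 2 le_rfl (by rw [hpq]; rfl)
    rcases lt_or_gt_of_ne hne with h | h
    · exact ⟨p, q, h, Or.inl hpq⟩
    · exact ⟨q, p, h, Or.inr hpq⟩
  choose xf yf hxylt hzshape using hletters
  have hlenz : ∀ i, (wpow (z i) (m i)).length = 2 * m i := by
    intro i; rw [wpow_length, (hz i).2]; ring
  have hposne : ∀ i j : Fin N, i ≠ j → pos i ≠ pos j := by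
    intro i j hne heq
    have hmi := hm i
    have hmj := hm j
    rcases hdisj i j hne with h | h <;> rw [hlenz] at h <;> omega
  have hgap : ∀ i j : Fin N, pos i < pos j → pos i + 2 * m i ≤ pos j := by
    intro i j hlt
    have hne : i ≠ j := by
      intro h; subst h; exact absurd hlt (lt_irrefl _)
    have hmj := hm j
    rcases hdisj i j hne with h | h <;> rw [hlenz] at h
    · exact h
    · omega
  -- both rotations occur with exponent 2n
  have hocc2 : ∀ (i : Fin N) (c : Bool),
      ∃ d : ℕ, d ≤ 1 ∧ OccursAt W (wpow (wrd xf yf i c) (2*n)) (pos i + d) := by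
    intro i c
    rcases hzshape i with hzi | hzi
    · have h := rot_occ (hm i) (hzi ▸ hocc i)
      cases c
      · exact ⟨0, by omega, by simpa [wrd] using h.1⟩
      · exact ⟨1, le_rfl, by simpa [wrd] using h.2⟩
    · have h := rot_occ (hm i) (hzi ▸ hocc i)
      cases c
      · exact ⟨1, le_rfl, by simpa [wrd] using h.2⟩
      · exact ⟨0, by omega, by simpa [wrd] using h.1⟩
  -- no decreasing chain has length ≥ n
  set cd : Fin N × Bool → ℕ := cdf l xf yf with hcd
  have chain_short : ∀ L : List (Fin N × Bool),
      L.Pairwise (Rrel pos cd) → L.length ≤ n - 1 := by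
    intro L hL
    by_contra hcon
    push_neg at hcon
    have hsub : List.Sublist (L.take n) L := List.take_sublist n L
    have htake : (L.take n).Pairwise (Rrel pos cd) := hL.sublist hsub
    have hlen' : (L.take n).length = n := by
      rw [List.length_take]; omega
    exact hndiv (divisible_of_chain l N n hn W pos m xf yf hxylt hgap hm hocc2 _
      htake hlen')
  -- chain statistics
  set r : Fin N → ℕ := fun i => Nat.findGreatest (fun k => EndCh pos cd i true k) n
    with hrdef
  set s : Fin N → ℕ := fun i => Nat.findGreatest (fun k => StartCh pos cd i false k) n
    with hsdef
  have hr1 : ∀ i, 1 ≤ r i := fun i =>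
    Nat.le_findGreatest (by omega) (endCh_one i true)
  have hs1 : ∀ i, 1 ≤ s i := fun i =>
    Nat.le_findGreatest (by omega) (startCh_one i false)
  have hrP : ∀ i, EndCh pos cd i true (r i) := fun i =>
    Nat.findGreatest_spec (by omega : 1 ≤ n) (endCh_one i true)
  have hsP : ∀ i, StartCh pos cd i false (s i) := fun i =>
    Nat.findGreatest_spec (by omega : 1 ≤ n) (startCh_one i false)
  have hrle : ∀ i, r i ≤ n - 1 := by
    intro i
    obtain ⟨L, hL, hlen⟩ := hrP i
    have := chain_short _ hL
    simp only [List.length_append, List.length_singleton] at this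
    omega
  have hsle : ∀ i, s i ≤ n - 1 := by
    intro i
    obtain ⟨L, hL, hlen⟩ := hsP i
    have := chain_short _ hL
    simp only [List.length_cons] at this
    omega
  have hcdlt : ∀ i : Fin N, cd (i, false) < cd (i, true) := by
    intro i
    have h1 : cd (i, false) = enc l (xf i : ℕ) (yf i : ℕ) := rfl
    have h2 : cd (i, true) = enc l (yf i : ℕ) (xf i : ℕ) := rfl
    rw [h1, h2]
    exact enc_lt_of_lt (yf i).isLt (Fin.lt_def.1 (hxylt i))
  have hrs : ∀ i, r i + s i ≤ n := by
    intro i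
    obtain ⟨L, hL, hlen⟩ := glue_at (hrP i) (hsP i) (hcdlt i)
    have h2 := chain_short L hL
    have h3 := hr1 i
    have h4 := hs1 i
    omega
  -- pairwise distinct letter pairs
  have hpairne : ∀ i j : Fin N, i ≠ j → ¬ (xf i = xf j ∧ yf i = yf j) := by
    rintro i j hne ⟨h1, h2⟩
    apply hrot i j hne
    rcases hzshape i with hi | hi <;> rcases hzshape j with hj | hj <;>
      rw [hi, hj, h1, h2] <;>
      first
        | exact List.IsRotated.refl _
        | exact isRot_pair _ _
    -- code comparison facts from the chain statistics
  have hcdi : ∀ (i : Fin N), cd (i, true) = enc l (yf i : ℕ) (xf i : ℕ) := fun _ => rfl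
  have hcdi' : ∀ (i : Fin N), cd (i, false) = enc l (xf i : ℕ) (yf i : ℕ) := fun _ => rfl
  have hnei : ∀ i j : Fin N, pos i < pos j → i ≠ j := by
    intro i j hpos h
    subst h
    exact absurd hpos (lt_irrefl _)
  have hRfact : ∀ i j : Fin N, pos i < pos j → r j ≤ r i → cd (i,true) < cd (j,true) := by
    intro i j hpos hrr
    rcases lt_trichotomy (cd (i,true)) (cd (j,true)) with h | h | h
    · exact h
    · exfalso
      rw [hcdi i, hcdi j] at h
      obtain ⟨e1, e2⟩ := enc_inj (xf i).isLt (xf j).isLt h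
      exact hpairne i j (hnei i j hpos) ⟨Fin.ext e2, Fin.ext e1⟩
    · exfalso
      have hext := endCh_extend (hrP i) ⟨hpos, h⟩
      have : r i + 1 ≤ r j := Nat.le_findGreatest (by have := hrle i; omega) hext
      omega
  have hSfact : ∀ i j : Fin N, pos i < pos j → s i ≤ s j → cd (i,false) < cd (j,false) := by
    intro i j hpos hss
    rcases lt_trichotomy (cd (i,false)) (cd (j,false)) with h | h | h
    · exact h
    · exfalso
      rw [hcdi' i, hcdi' j] at h
      obtain ⟨e1, e2⟩ := enc_inj (yf i).isLt (yf j).isLt h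
      exact hpairne i j (hnei i j hpos) ⟨Fin.ext e1, Fin.ext e2⟩
    · exfalso
      have hext := startCh_extend (hsP j) ⟨hpos, h⟩
      have : s j + 1 ≤ s i := Nat.le_findGreatest (by have := hsle j; omega) hext
      omega
  have hTfact : ∀ i j : Fin N, pos i < pos j → n ≤ r i + s j → (yf i : ℕ) ≤ (xf j : ℕ) := by
    intro i j hpos hsum
    rcases lt_trichotomy (cd (i,true)) (cd (j,false)) with h | h | h
    · rw [hcdi i, hcdi' j] at h
      rcases (enc_lt_iff (xf i).isLt (yf j).isLt).1 h with h' | ⟨h', -⟩ <;> omega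
    · exfalso
      rw [hcdi i, hcdi' j] at h
      obtain ⟨e1, e2⟩ := enc_inj (xf i).isLt (yf j).isLt h
      have hi := Fin.lt_def.1 (hxylt i)
      have hj := Fin.lt_def.1 (hxylt j)
      omega
    · exfalso
      obtain ⟨L, hL, hlen⟩ := glue_two (hrP i) (hsP j) ⟨hpos, h⟩
      have := chain_short L hL
      omega
  -- per-class bound
  have hclass : ∀ a b : ℕ, 1 ≤ a → a < b → b ≤ n - 1 →
      (Finset.univ.filter (fun i : Fin N =>
        (r i = a ∧ s i = n - b) ∨ (r i = b ∧ s i = n - b) ∨ (r i = a ∧ s i = n - a))).card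
        ≤ 2 * l - 1 := by
    intro a b ha hab hbn
    set lab : Fin N → ℕ := fun i => if r i = b then 1 else if s i = n - a then 2 else 0
      with hlab
    set S : Finset (Fin N) := Finset.univ.filter (fun i : Fin N =>
        (r i = a ∧ s i = n - b) ∨ (r i = b ∧ s i = n - b) ∨ (r i = a ∧ s i = n - a))
      with hSdef
    have hdecode : ∀ u ∈ S,
        ((r u = a ∧ s u = n - b) ∧ lab u = 0) ∨
        ((r u = b ∧ s u = n - b) ∧ lab u = 1) ∨
        ((r u = a ∧ s u = n - a) ∧ lab u = 2) := by
      intro u hu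
      have hu' := (Finset.mem_filter.1 hu).2
      have hnab : a ≠ b := by omega
      have hnsub : n - a ≠ n - b := by omega
      rcases hu' with ⟨h1, h2⟩ | ⟨h1, h2⟩ | ⟨h1, h2⟩
      · refine Or.inl ⟨⟨h1, h2⟩, ?_⟩
        simp only [hlab]
        rw [if_neg (by omega), if_neg (by omega)]
      · refine Or.inr (Or.inl ⟨⟨h1, h2⟩, ?_⟩)
        simp only [hlab]
        rw [if_pos h1]
      · refine Or.inr (Or.inr ⟨⟨h1, h2⟩, ?_⟩)
        simp only [hlab]
        rw [if_neg (by omega), if_pos h2]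
    apply key l pos (fun i => (xf i : ℕ)) (fun i => (yf i : ℕ)) lab S
    · intro i _ j _ hpq
      by_contra hne
      exact hposne i j hne hpq
    · intro i _
      exact ⟨Fin.lt_def.1 (hxylt i), (yf i).isLt⟩
    · intro i hi j hj hpos
      have hdi := hdecode i hi
      have hdj := hdecode j hj
      refine ⟨?_, ?_, ?_, ?_, ?_⟩
      · -- lab i = 1 (V) : stacked below anything later
        intro h1
        have hri : r i = b := by
          rcases hdi with ⟨⟨h,h'⟩,hl⟩ | ⟨⟨h,h'⟩,hl⟩ | ⟨⟨h,h'⟩,hl⟩ <;> omega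
        have hsj : n - b ≤ s j := by
          rcases hdj with ⟨⟨h,h'⟩,hl⟩ | ⟨⟨h,h'⟩,hl⟩ | ⟨⟨h,h'⟩,hl⟩ <;> omega
        exact hTfact i j hpos (by omega)
      · -- lab j = 2 (W) : stacked above anything earlier
        intro h2
        have hsj : s j = n - a := by
          rcases hdj with ⟨⟨h,h'⟩,hl⟩ | ⟨⟨h,h'⟩,hl⟩ | ⟨⟨h,h'⟩,hl⟩ <;> omega
        have hri : a ≤ r i := by
          rcases hdi with ⟨⟨h,h'⟩,hl⟩ | ⟨⟨h,h'⟩,hl⟩ | ⟨⟨h,h'⟩,hl⟩ <;> omega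
        exact hTfact i j hpos (by omega)
      · -- both M : componentwise
        intro hi1 hi2 hj1 hj2
        have hii : r i = a ∧ s i = n - b := by
          rcases hdi with ⟨⟨h,h'⟩,hl⟩ | ⟨⟨h,h'⟩,hl⟩ | ⟨⟨h,h'⟩,hl⟩ <;>
            first | exact ⟨h, h'⟩ | omega
        have hjj : r j = a ∧ s j = n - b := by
          rcases hdj with ⟨⟨h,h'⟩,hl⟩ | ⟨⟨h,h'⟩,hl⟩ | ⟨⟨h,h'⟩,hl⟩ <;>
            first | exact ⟨h, h'⟩ | omega
        have hlt1 := hRfact i j hpos (by omega)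
        rw [hcdi i, hcdi j] at hlt1
        have hy : (yf i : ℕ) ≤ (yf j : ℕ) := by
          rcases (enc_lt_iff (xf i).isLt (xf j).isLt).1 hlt1 with h' | ⟨h', -⟩ <;> omega
        have hlt2 := hSfact i j hpos (by omega)
        rw [hcdi' i, hcdi' j] at hlt2
        have hx : (xf i : ℕ) ≤ (xf j : ℕ) := by
          rcases (enc_lt_iff (yf i).isLt (yf j).isLt).1 hlt2 with h' | ⟨h', -⟩ <;> omega
        refine ⟨hx, hy, ?_⟩
        rintro ⟨e1, e2⟩
        exact hpairne i j (hnei i j hpos) ⟨Fin.ext e1, Fin.ext e2⟩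
      · -- i W, j M : big words increase
        intro hi2 hj1 hj2
        have hii : r i = a := by
          rcases hdi with ⟨⟨h,h'⟩,hl⟩ | ⟨⟨h,h'⟩,hl⟩ | ⟨⟨h,h'⟩,hl⟩ <;> omega
        have hjj : r j = a := by
          rcases hdj with ⟨⟨h,h'⟩,hl⟩ | ⟨⟨h,h'⟩,hl⟩ | ⟨⟨h,h'⟩,hl⟩ <;> omega
        have hlt1 := hRfact i j hpos (by omega)
        rw [hcdi i, hcdi j] at hlt1
        exact (enc_lt_iff (xf i).isLt (xf j).isLt).1 hlt1
      · -- i M, j V : small words increase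
        intro hi1 hi2 hj1
        have hii : s i = n - b := by
          rcases hdi with ⟨⟨h,h'⟩,hl⟩ | ⟨⟨h,h'⟩,hl⟩ | ⟨⟨h,h'⟩,hl⟩ <;> omega
        have hjj : s j = n - b := by
          rcases hdj with ⟨⟨h,h'⟩,hl⟩ | ⟨⟨h,h'⟩,hl⟩ | ⟨⟨h,h'⟩,hl⟩ <;> omega
        have hlt2 := hSfact i j hpos (by omega)
        rw [hcdi' i, hcdi' j] at hlt2
        exact (enc_lt_iff (yf i).isLt (yf j).isLt).1 hlt2
  -- the pairs of levels
  set PR : Finset (ℕ × ℕ) :=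
    ((Finset.Icc 1 (n-1)) ×ˢ (Finset.Icc 1 (n-1))).filter (fun p => p.1 < p.2) with hPR
  set SC : ℕ × ℕ → Finset (Fin N) := fun p => Finset.univ.filter (fun i : Fin N =>
      (r i = p.1 ∧ s i = n - p.2) ∨ (r i = p.2 ∧ s i = n - p.2) ∨
      (r i = p.1 ∧ s i = n - p.1)) with hSC
  have hcover : (Finset.univ : Finset (Fin N)) ⊆ PR.biUnion SC := by
    intro i _
    rw [Finset.mem_biUnion]
    have hr1i := hr1 i
    have hs1i := hs1 i
    have hrlei := hrle i
    have hslei := hsle i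
    have hrsi := hrs i
    rcases Nat.lt_or_ge (r i) (n - s i) with hlt | hge
    · refine ⟨(r i, n - s i), ?_, ?_⟩
      · simp only [hPR, Finset.mem_filter, Finset.mem_product, Finset.mem_Icc]
        refine ⟨⟨⟨by omega, by omega⟩, ⟨by omega, by omega⟩⟩, by omega⟩
      · simp only [hSC]
        exact Finset.mem_filter.2 ⟨Finset.mem_univ _, Or.inl ⟨rfl, by omega⟩⟩
    · -- diagonal : r i = n - s i
      rcases Nat.lt_or_ge (r i) (n - 1) with hc | hc
      · refine ⟨(r i, n - 1), ?_, ?_⟩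
        · simp only [hPR, Finset.mem_filter, Finset.mem_product, Finset.mem_Icc]
          refine ⟨⟨⟨by omega, by omega⟩, ⟨by omega, by omega⟩⟩, by omega⟩
        · simp only [hSC]
          exact Finset.mem_filter.2 ⟨Finset.mem_univ _, Or.inr (Or.inr ⟨rfl, by omega⟩)⟩
      · refine ⟨(1, n - 1), ?_, ?_⟩
        · simp only [hPR, Finset.mem_filter, Finset.mem_product, Finset.mem_Icc]
          refine ⟨⟨⟨by omega, by omega⟩, ⟨by omega, by omega⟩⟩, by omega⟩
        · simp only [hSC]
          exact Finset.mem_filter.2 ⟨Finset.mem_univ _, Or.inr (Or.inl ⟨by omega, by omega⟩)⟩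
  have hPRcard : PR.card ≤ (n-1) * (n-2) / 2 := by
    have hinjmap : ∀ p ∈ PR, ∀ q ∈ PR,
        ({p.1, p.2} : Finset ℕ) = ({q.1, q.2} : Finset ℕ) → p = q := by
      intro p hp q hq heq
      obtain ⟨-, hp2⟩ := Finset.mem_filter.1 hp
      obtain ⟨-, hq2⟩ := Finset.mem_filter.1 hq
      have h1 : p.1 ∈ ({q.1, q.2} : Finset ℕ) := by
        rw [← heq]; simp
      have h2 : p.2 ∈ ({q.1, q.2} : Finset ℕ) := by
        rw [← heq]; simp
      have h3 : q.1 ∈ ({p.1, p.2} : Finset ℕ) := by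
        rw [heq]; simp
      simp only [Finset.mem_insert, Finset.mem_singleton] at h1 h2 h3
      have : p.1 = q.1 ∧ p.2 = q.2 := by omega
      exact Prod.ext this.1 this.2
    have hmapmem : ∀ p ∈ PR,
        ({p.1, p.2} : Finset ℕ) ∈ (Finset.Icc 1 (n-1)).powersetCard 2 := by
      intro p hp
      obtain ⟨hp1, hp2⟩ := Finset.mem_filter.1 hp
      rw [Finset.mem_product] at hp1
      rw [Finset.mem_powersetCard]
      constructor
      · intro x hx
        simp only [Finset.mem_insert, Finset.mem_singleton] at hx
        rcases hx with h | h <;> subst h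
        · exact hp1.1
        · exact hp1.2
      · rw [Finset.card_pair (by omega : p.1 ≠ p.2)]
    calc PR.card ≤ ((Finset.Icc 1 (n-1)).powersetCard 2).card :=
          Finset.card_le_card_of_injOn _ hmapmem hinjmap
      _ = (n-1) * (n-2) / 2 := by
          rw [Finset.card_powersetCard, Nat.card_Icc]
          have h9 : n - 1 + 1 - 1 = n - 1 := by omega
          rw [h9, Nat.choose_two_right]
          have h10 : n - 1 - 1 = n - 2 := by omega
          rw [h10]
  have hbound : ∀ p ∈ PR, (SC p).card ≤ 2 * l - 1 := by
    intro p hp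
    obtain ⟨hp1, hp2⟩ := Finset.mem_filter.1 hp
    rw [Finset.mem_product, Finset.mem_Icc, Finset.mem_Icc] at hp1
    exact hclass p.1 p.2 (by omega) hp2 (by omega)
  have hN : N ≤ PR.card * (2 * l - 1) := by
    calc N = (Finset.univ : Finset (Fin N)).card := by
          rw [Finset.card_univ, Fintype.card_fin]
      _ ≤ (PR.biUnion SC).card := Finset.card_le_card hcover
      _ ≤ ∑ p ∈ PR, (SC p).card := Finset.card_biUnion_le
      _ ≤ ∑ _p ∈ PR, (2 * l - 1) := Finset.sum_le_sum hbound
      _ = PR.card * (2 * l - 1) := by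
          rw [Finset.sum_const, smul_eq_mul]
  have hdvd : 2 ∣ (n-1) * (n-2) := by
    have := Nat.even_mul_succ_self (n-2)
    have heq : (n-2) * (n-2+1) = (n-1) * (n-2) := by
      have : n - 2 + 1 = n - 1 := by omega
      rw [this, Nat.mul_comm]
    rw [heq] at this
    exact this.two_dvd
  calc N ≤ PR.card * (2 * l - 1) := hN
    _ ≤ ((n-1) * (n-2) / 2) * (2 * l - 1) := Nat.mul_le_mul_right _ hPRcard
    _ = (2 * l - 1) * ((n-1) * (n-2) / 2) := Nat.mul_comm _ _
    _ = (2 * l - 1) * ((n-1) * (n-2)) / 2 := (Nat.mul_div_assoc _ hdvd).symm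
    _ = (2 * l - 1) * (n - 1) * (n - 2) / 2 := by rw [Nat.mul_assoc]
end

section
/- Let l ≥ 1 and n ≥ 2 be integers, and let W be a word over the alphabet {1,…,l} that is not n-divisible. Consider any family of pairwise disjoint occurrences in W of subwords of the form zᵢ^{mᵢ}·vᵢ, where each zᵢ is a noncyclic word with 1 ≤ |zᵢ| ≤ n−1, each mᵢ > 2n, and each vᵢ is a word of the same length as zᵢ with vᵢ ≠ zᵢ. Then this family has fewer than 8(l+1)^n·n^6 members. -/
set_option linter.unusedSectionVars false

section Aux
variable {α : Type*} [LinearOrder α]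

def LtW (u w : List α) : Prop :=
  ∃ (p : List α) (s t : α) (x y : List α), u = p ++ s :: x ∧ w = p ++ t :: y ∧ s < t

lemma ltW_append (a : List α) {u w : List α} (h : LtW u w) : LtW (a ++ u) (a ++ w) := by
  obtain ⟨p, s, t, x, y, hu, hw, hst⟩ := h
  exact ⟨a ++ p, s, t, x, y, by simp [hu], by simp [hw], hst⟩

lemma ltW_tri : ∀ (u w : List α), u.length = w.length → u ≠ w → LtW u w ∨ LtW w u
  | [], [], _, h => absurd rfl h
  | [], _ :: _, hlen, _ => by simp at hlen
  | _ :: _, [], hlen, _ => by simp at hlen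
  | a :: u, b :: w, hlen, hne => by
    rcases lt_trichotomy a b with h | h | h
    · exact Or.inl ⟨[], a, b, u, w, rfl, rfl, h⟩
    · subst h
      have hne' : u ≠ w := by rintro rfl; exact hne rfl
      rcases ltW_tri u w (by simpa using hlen) hne' with h | h
      · obtain ⟨p, s, t, x, y, h1, h2, h3⟩ := h
        exact Or.inl ⟨a :: p, s, t, x, y, by simp [h1], by simp [h2], h3⟩
      · obtain ⟨p, s, t, x, y, h1, h2, h3⟩ := h
        exact Or.inr ⟨a :: p, s, t, x, y, by simp [h1], by simp [h2], h3⟩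
    · exact Or.inr ⟨[], b, a, w, u, rfl, rfl, h⟩

lemma wordGt_cons (p : List α) {s t : α} (x y : List α) (h : s < t) :
    WordGt (p ++ t :: x) (p ++ s :: y) := by
  constructor
  · induction p with
    | nil => exact List.Lex.rel h
    | cons a p ih => exact List.Lex.cons ih
  · intro hp
    rw [List.prefix_append_right_inj, List.cons_prefix_cons] at hp
    exact absurd hp.1 (ne_of_lt h)

lemma wordGt_of_ltW_prefix {B B' w w' : List α} (h : LtW w' w) (hB : w <+: B)
    (hB' : w' <+: B') : WordGt B B' := by
  obtain ⟨p, s, t, x, y, hw', hw, hst⟩ := h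
  obtain ⟨r, hr⟩ := hB
  obtain ⟨r', hr'⟩ := hB'
  have h1 : B = p ++ t :: (y ++ r) := by rw [← hr, hw]; simp
  have h2 : B' = p ++ s :: (x ++ r') := by rw [← hr', hw']; simp
  rw [h1, h2]
  exact wordGt_cons p _ _ hst

lemma wpow_add (z : List α) (a b : ℕ) : wpow z (a + b) = wpow z a ++ wpow z b := by
  induction a with
  | zero => simp [wpow]
  | succ a ih => rw [Nat.succ_add]; simp [wpow, ih]

lemma wpow_length (z : List α) (k : ℕ) : (wpow z k).length = k * z.length := by
  induction k with
  | zero => simp [wpow]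
  | succ k ih => simp [wpow, ih, Nat.succ_mul]; ring

lemma wpow_one (z : List α) : wpow z 1 = z := by simp [wpow]

lemma wpow_prefix (z : List α) {a b : ℕ} (h : a ≤ b) : wpow z a <+: wpow z b := by
  rw [← Nat.add_sub_cancel' h, wpow_add]
  exact List.prefix_append _ _

lemma wpow_ne_nil {z : List α} (hz : z ≠ []) {k : ℕ} (hk : 1 ≤ k) : wpow z k ≠ [] := by
  obtain ⟨k, rfl⟩ := Nat.exists_eq_add_of_le hk
  rw [Nat.add_comm]
  simp [wpow, hz]

end Aux

lemma flatten_blocks {α : Type*} (W : List α) (g : ℕ → ℕ) (hmono : ∀ k, g k ≤ g (k + 1)) :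
    ∀ (n s : ℕ),
      (List.ofFn fun j : Fin n => (W.drop (g (s + j))).take (g (s + j + 1) - g (s + j))).flatten
        = (W.drop (g s)).take (g (s + n) - g s) := by
  have hm : Monotone g := monotone_nat_of_le_succ hmono
  intro n
  induction n with
  | zero => intro s; simp
  | succ n ih =>
    intro s
    rw [List.ofFn_succ, List.flatten_cons]
    have he : (List.ofFn fun i : Fin n =>
        (W.drop (g (s + ↑(Fin.succ i)))).take (g (s + ↑(Fin.succ i) + 1) - g (s + ↑(Fin.succ i))))
        = List.ofFn fun j : Fin n => (W.drop (g ((s+1) + ↑j))).take (g ((s+1) + ↑j + 1) - g ((s+1) + ↑j)) := by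
      apply congrArg
      funext i
      have : s + ↑(Fin.succ i) = (s+1) + ↑i := by simp [Fin.val_succ]; omega
      rw [this]
    rw [he, ih (s+1)]
    have hab : g s ≤ g (s+1) := hmono s
    have hbc : g (s+1) ≤ g (s+1+n) := hm (by omega)
    have harith : g (s + (n+1)) - g s = (g (s+1) - g s) + (g (s+1+n) - g (s+1)) := by
      have : s + (n+1) = s + 1 + n := by omega
      rw [this]; omega
    have hdd : List.drop (g (s+1)) W = List.drop (g (s+1) - g s) (List.drop (g s) W) := by
      rw [List.drop_drop]
      congr 1
      omega
    rw [harith, List.take_add, hdd]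
    simp


lemma main_construct {α : Type*} [LinearOrder α] (n : ℕ)
    (W z : List α) (hz : z ≠ [])
    (v : Fin n → List α) (q m c : Fin n → ℕ)
    (hc1 : ∀ j, 1 ≤ c j) (hcm : ∀ j, c j ≤ m j)
    (hvlen : ∀ j, (v j).length = z.length)
    (hocc : ∀ j, ∃ pre suf : List α, pre.length = q j ∧ W = pre ++ (wpow z (m j) ++ v j) ++ suf)
    (hsep : ∀ j j' : Fin n, j < j' → q j + m j * z.length + z.length ≤ q j')
    (hcomp : ∀ j j' : Fin n, j < j' →
      (c j' + 1 ≤ c j ∧ LtW (v j') z) ∨ (c j + 1 ≤ c j' ∧ LtW z (v j))) :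
    NDivisible W n := by
  classical
  set d := z.length with hd
  have hd1 : 1 ≤ d := List.length_pos_iff.mpr hz
  choose pre suf hpre hWoc using hocc
  -- cut points
  set u : ℕ → ℕ := fun k => if h : k < n then q ⟨k, h⟩ + (m ⟨k, h⟩ - c ⟨k, h⟩) * d else W.length
    with hu
  have hufin : ∀ j : Fin n, u (j : ℕ) = q j + (m j - c j) * d := by
    intro j
    simp only [hu, dif_pos j.isLt]
  -- dropping to a cut point
  have hdrop : ∀ j : Fin n, W.drop (u (j : ℕ)) = wpow z (c j) ++ (v j ++ suf j) := by
    intro j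
    have hsplit : wpow z (m j) = wpow z (m j - c j) ++ wpow z (c j) := by
      rw [← wpow_add, Nat.sub_add_cancel (hcm j)]
    have : W = (pre j ++ wpow z (m j - c j)) ++ (wpow z (c j) ++ (v j ++ suf j)) := by
      rw [hWoc j, hsplit]; simp
    rw [this]
    have hlen : (pre j ++ wpow z (m j - c j)).length = u (j : ℕ) := by
      rw [hufin j, List.length_append, hpre j, wpow_length]
    rw [← hlen, List.drop_left]
  -- word length bound
  have hWlen : ∀ j : Fin n, u (j : ℕ) + (c j) * d + d ≤ W.length := by
    intro j
    have := hWoc j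
    have hL : W.length = q j + (m j * d + (v j).length) + (suf j).length := by
      rw [this]; simp [List.length_append, hpre j, wpow_length]; rw [← hd]; omega
    rw [hL, hvlen j, hufin j]
    have : (m j - c j) * d + c j * d = m j * d := by
      rw [← Nat.add_mul, Nat.sub_add_cancel (hcm j)]
    omega
  -- separation at cut points
  have hstep : ∀ k, u k ≤ u (k + 1) := by
    intro k
    by_cases hk : k < n
    · by_cases hk1 : k + 1 < n
      · have hs := hsep ⟨k, hk⟩ ⟨k + 1, hk1⟩ (by simp)
        rw [hu]
        simp only [dif_pos hk, dif_pos hk1]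
        have hc := hcm ⟨k, hk⟩
        have : (m ⟨k, hk⟩ - c ⟨k, hk⟩) * d ≤ m ⟨k, hk⟩ * d := Nat.mul_le_mul_right d (Nat.sub_le _ _)
        omega
      · have hW := hWlen ⟨k, hk⟩
        rw [hu]
        simp only [dif_pos hk, dif_neg hk1]
        rw [hufin ⟨k, hk⟩] at hW
        omega
    · have hk1 : ¬ (k + 1 < n) := by omega
      rw [hu]; simp only [dif_neg hk, dif_neg hk1]; exact le_rfl
  have hgap : ∀ j : Fin n, u (j : ℕ) + (c j * d + d) ≤ u ((j : ℕ) + 1) := by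
    intro j
    by_cases hk1 : (j : ℕ) + 1 < n
    · have hs := hsep j ⟨(j : ℕ) + 1, hk1⟩ (by simp [Fin.lt_def])
      have h2 : u ((j:ℕ)+1) = q ⟨(j:ℕ)+1, hk1⟩ + (m ⟨(j:ℕ)+1, hk1⟩ - c ⟨(j:ℕ)+1, hk1⟩) * d :=
        hufin ⟨(j:ℕ)+1, hk1⟩
      rw [hufin j, h2]
      have : (m j - c j) * d + c j * d = m j * d := by
        rw [← Nat.add_mul, Nat.sub_add_cancel (hcm j)]
      omega
    · have : u ((j:ℕ)+1) = W.length := by rw [hu]; simp only [dif_neg hk1]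
      rw [this]
      have := hWlen j
      omega
  -- the blocks
  set f : Fin n → List α := fun j => (W.drop (u (j : ℕ))).take (u ((j : ℕ) + 1) - u (j : ℕ))
    with hf
  -- block prefix
  have hbp : ∀ j : Fin n, wpow z (c j) ++ v j <+: f j := by
    intro j
    rw [hf]
    simp only
    rw [hdrop j]
    have hlenpv : (wpow z (c j) ++ v j).length = c j * d + d := by
      rw [List.length_append, wpow_length, hvlen j]
    have hle : c j * d + d ≤ u ((j : ℕ) + 1) - u (j : ℕ) := by
      have := hgap j
      omega
    obtain ⟨e, he⟩ := Nat.exists_eq_add_of_le hle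
    have hre : wpow z (c j) ++ (v j ++ suf j) = (wpow z (c j) ++ v j) ++ suf j := by simp
    rw [hre, he, ← hlenpv, List.take_append]
    rw [List.take_of_length_le (Nat.le_add_right _ e)]
    exact List.prefix_append _ _
  refine ⟨W.take (u 0), f, ?_, ?_, ?_⟩
  · have hfb := flatten_blocks W u hstep n 0
    have he2 : (List.ofFn fun j : Fin n =>
        (W.drop (u (0 + (j:ℕ)))).take (u (0 + (j:ℕ) + 1) - u (0 + (j:ℕ)))) = List.ofFn f := by
      apply congrArg; funext j; simp [hf]
    rw [← he2, hfb]
    have hlast : u (0 + n) = W.length := by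
      rw [hu]; simp
    rw [hlast]
    have : (W.drop (u 0)).take (W.length - u 0) = W.drop (u 0) := by
      apply List.take_of_length_le
      rw [List.length_drop]
    rw [this, List.take_append_drop]
  · intro j
    intro hnil
    have := hbp j
    rw [hnil, List.prefix_nil] at this
    have : wpow z (c j) = [] := by
      rcases List.append_eq_nil_iff.mp this with ⟨h1, _⟩
      exact h1
    exact wpow_ne_nil hz (hc1 j) this
  · intro j j' hjj'
    rcases hcomp j j' hjj' with ⟨hcc, hlt⟩ | ⟨hcc, hlt⟩
    · -- v j' < z : bigger block starts with more copies of z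
      apply wordGt_of_ltW_prefix (w := wpow z (c j' + 1)) (w' := wpow z (c j') ++ v j')
      · have : wpow z (c j' + 1) = wpow z (c j') ++ z := by
          rw [wpow_add, wpow_one]
        rw [this]
        exact ltW_append _ hlt
      · exact ((wpow_prefix z hcc).trans (List.prefix_append _ _)).trans (hbp j)
      · exact hbp j'
    · -- z < v j
      apply wordGt_of_ltW_prefix (w := wpow z (c j) ++ v j) (w' := wpow z (c j + 1))
      · have : wpow z (c j + 1) = wpow z (c j) ++ z := by
          rw [wpow_add, wpow_one]
        rw [this]
        exact ltW_append _ hlt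
      · exact hbp j
      · exact ((wpow_prefix z hcc).trans (List.prefix_append _ _)).trans (hbp j')



def enc (l n : ℕ) (a : List (Fin l)) : Fin n → Fin (l + 1) :=
  fun j => if h : (j : ℕ) < a.length then (a.get ⟨j, h⟩).castSucc else Fin.last l

lemma enc_inj {l n : ℕ} {a b : List (Fin l)} (ha : a.length < n) (hb : b.length < n)
    (h : enc l n a = enc l n b) : a = b := by
  have hlen : a.length = b.length := by
    by_contra hne
    rcases Nat.lt_or_ge a.length b.length with hl | hl
    · have h2 := congrFun h ⟨a.length, lt_trans hl hb⟩
      simp only [enc] at h2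
      rw [dif_neg (by simp), dif_pos (by simpa using hl)] at h2
      exact absurd h2.symm (ne_of_lt (Fin.castSucc_lt_last _))
    · have hl2 : b.length < a.length := by omega
      have h2 := congrFun h ⟨b.length, lt_trans hl2 ha⟩
      simp only [enc] at h2
      rw [dif_pos (by simpa using hl2), dif_neg (by simp)] at h2
      exact absurd h2 (ne_of_lt (Fin.castSucc_lt_last _))
  apply List.ext_getElem hlen
  intro i h1 h2
  have h3 := congrFun h ⟨i, lt_trans h1 ha⟩
  simp only [enc] at h3
  rw [dif_pos (by simpa using h1), dif_pos (by simpa using h2)] at h3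
  have := Fin.castSucc_injective l h3
  simpa using this


/-- If `W` over an `l`-letter alphabet (`l ≥ 1`, `n ≥ 2`) is not `n`-divisible,
then any family of pairwise disjoint occurrences in `W` of subwords
`zᵢ^{mᵢ}·vᵢ`, where `zᵢ` is noncyclic with `1 ≤ |zᵢ| ≤ n−1`, `mᵢ > 2n`, and
`vᵢ` is a word of the same length as `zᵢ` with `vᵢ ≠ zᵢ`, has fewer than
`8(l+1)^n·n^6` members. -/
theorem essential_height_bound (l n : ℕ) (hl : 1 ≤ l) (hn : 2 ≤ n)
    (W : List (Fin l)) (hW : W ≠ []) (hndiv : ¬ NDivisible W n)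
    (N : ℕ) (z v : Fin N → List (Fin l)) (m : Fin N → ℕ) (pos : Fin N → ℕ)
    (hz : ∀ i, Noncyclic (z i) ∧ 1 ≤ (z i).length ∧ (z i).length ≤ n - 1)
    (hm : ∀ i, 2 * n < m i)
    (hv : ∀ i, (v i).length = (z i).length ∧ v i ≠ z i)
    (hocc : ∀ i, OccursAt W (wpow (z i) (m i) ++ v i) (pos i))
    (hdisj : ∀ i j, i ≠ j →
      pos i + (wpow (z i) (m i) ++ v i).length ≤ pos j ∨
      pos j + (wpow (z j) (m j) ++ v j).length ≤ pos i) :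
    N < 8 * (l + 1) ^ n * n ^ 6 := by
  classical
  by_contra hcon
  push_neg at hcon
  have hd1 : ∀ i, 1 ≤ (z i).length := fun i => (hz i).2.1
  have hzn : ∀ i, z i ≠ [] := fun i => ((hz i).1).1
  have htri : ∀ i, LtW (v i) (z i) ∨ LtW (z i) (v i) :=
    fun i => ltW_tri _ _ (hv i).1 (hv i).2
  set sgn : Fin N → Bool := fun i => if LtW (v i) (z i) then true else false with hsgn
  have hsgnT : ∀ i, sgn i = true → LtW (v i) (z i) := by
    intro i hi
    by_contra hL
    rw [hsgn] at hi
    simp [if_neg hL] at hi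
  have hsgnF : ∀ i, sgn i = false → LtW (z i) (v i) := by
    intro i hi
    by_cases hL : LtW (v i) (z i)
    · rw [hsgn] at hi; simp [if_pos hL] at hi
    · exact (htri i).resolve_left hL
  set key : Fin N → ((Fin n → Fin (l + 1)) × Bool) := fun i => (enc l n (z i), sgn i) with hkey
  have hcard : Fintype.card ((Fin n → Fin (l + 1)) × Bool) * (n - 1) < Fintype.card (Fin N) := by
    rw [Fintype.card_prod, Fintype.card_fun, Fintype.card_bool, Fintype.card_fin,
      Fintype.card_fin, Fintype.card_fin]
    have h6 : n ≤ n ^ 6 := Nat.le_self_pow (by norm_num) n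
    have hlt : 2 * (n - 1) < 8 * n ^ 6 := by omega
    have hp : 0 < (l + 1) ^ n := Nat.pow_pos (by omega)
    calc (l + 1) ^ n * 2 * (n - 1) = (l + 1) ^ n * (2 * (n - 1)) := by ring
      _ < (l + 1) ^ n * (8 * n ^ 6) := by exact mul_lt_mul_of_pos_left hlt hp
      _ = 8 * (l + 1) ^ n * n ^ 6 := by ring
      _ ≤ N := hcon
  obtain ⟨k, hk⟩ := Fintype.exists_lt_card_fiber_of_mul_lt_card key hcard
  set F : Finset (Fin N) := Finset.univ.filter (fun i => key i = k) with hF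
  have hFcard : n ≤ F.card := by omega
  -- positions are injective
  have hlenocc : ∀ i, 0 < (wpow (z i) (m i) ++ v i).length := by
    intro i
    rw [List.length_append, wpow_length]
    have h1 := hd1 i
    have h2 := hm i
    have h3 : 0 < m i * (z i).length := Nat.mul_pos (by omega) (by omega)
    omega
  have hposinj : ∀ i j : Fin N, pos i = pos j → i = j := by
    intro i j hij
    by_contra hne
    have h1 := hlenocc i
    have h2 := hlenocc j
    rcases hdisj i j hne with h | h <;> omega
  set P : Finset ℕ := F.image pos with hP
  have hPcard : n ≤ P.card := by
    rw [hP, Finset.card_image_of_injOn (fun i _ j _ h => hposinj i j h)]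
    exact hFcard
  set emb := P.orderEmbOfFin rfl with hemb
  set π : Fin n → ℕ := fun j => emb (Fin.castLE hPcard j) with hπ
  have hπmono : ∀ j j' : Fin n, j < j' → π j < π j' := by
    intro j j' h
    exact emb.strictMono h
  have hπmem : ∀ j, π j ∈ P := fun j => Finset.orderEmbOfFin_mem P rfl _
  have hchoice : ∀ j : Fin n, ∃ i ∈ F, pos i = π j := fun j => Finset.mem_image.mp (hπmem j)
  choose g hgF hgpos using hchoice
  have hj0 : 0 < n := by omega
  set j0 : Fin n := ⟨0, hj0⟩ with hj0def
  have hgkey : ∀ j, key (g j) = k := fun j => (Finset.mem_filter.mp (hgF j)).2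
  have hzeq : ∀ j, z (g j) = z (g j0) := by
    intro j
    have h1 : enc l n (z (g j)) = enc l n (z (g j0)) := by
      have := congrArg Prod.fst ((hgkey j).trans (hgkey j0).symm)
      simpa [hkey] using this
    have hlt : ∀ i, (z i).length < n := by
      intro i
      have := (hz i).2.2
      omega
    exact enc_inj (hlt _) (hlt _) h1
  have hseq : ∀ j, sgn (g j) = sgn (g j0) := by
    intro j
    have := congrArg Prod.snd ((hgkey j).trans (hgkey j0).symm)
    simpa [hkey] using this
  set z0 := z (g j0) with hz0
  have hz0ne : z0 ≠ [] := hzn (g j0)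
  have hvlen' : ∀ j : Fin n, (v (g j)).length = z0.length := by
    intro j
    rw [(hv (g j)).1, hzeq j]
  have hocc' : ∀ j : Fin n, ∃ pre suf : List (Fin l),
      pre.length = pos (g j) ∧ W = pre ++ (wpow z0 (m (g j)) ++ v (g j)) ++ suf := by
    intro j
    obtain ⟨pre, suf, h1, h2⟩ := hocc (g j)
    exact ⟨pre, suf, h1, by rw [← hzeq j]; exact h2⟩
  have hsep' : ∀ j j' : Fin n, j < j' →
      pos (g j) + m (g j) * z0.length + z0.length ≤ pos (g j') := by
    intro j j' hjj'
    have hlt : pos (g j) < pos (g j') := by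
      rw [hgpos j, hgpos j']
      exact hπmono j j' hjj'
    have hne : g j ≠ g j' := by
      intro he
      rw [he] at hlt
      exact lt_irrefl _ hlt
    rcases hdisj _ _ hne with h | h
    · rw [List.length_append, wpow_length, (hv (g j)).1, hzeq j] at h
      omega
    · have := hlenocc (g j')
      omega
  have hmle : ∀ j : Fin n, n ≤ m (g j) := by
    intro j
    have := hm (g j)
    omega
  cases hsb : sgn (g j0) with
  | true =>
    have hall : ∀ j : Fin n, LtW (v (g j)) z0 := by
      intro j
      have hs : sgn (g j) = true := (hseq j).trans hsb
      have := hsgnT (g j) hs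
      rwa [hzeq j] at this
    apply hndiv
    apply main_construct n W z0 hz0ne (fun j => v (g j)) (fun j => pos (g j))
      (fun j => m (g j)) (fun j => n - (j : ℕ))
    · intro j
      have := j.isLt
      omega
    · intro j
      have := hmle j
      omega
    · exact hvlen'
    · exact hocc'
    · exact hsep'
    · intro j j' hjj'
      left
      constructor
      · have h1 := j'.isLt
        have h2 : (j : ℕ) < (j' : ℕ) := hjj'
        omega
      · exact hall j'
  | false =>
    have hall : ∀ j : Fin n, LtW z0 (v (g j)) := by
      intro j
      have hs : sgn (g j) = false := (hseq j).trans hsb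
      have := hsgnF (g j) hs
      rwa [hzeq j] at this
    apply hndiv
    apply main_construct n W z0 hz0ne (fun j => v (g j)) (fun j => pos (g j))
      (fun j => m (g j)) (fun j => (j : ℕ) + 1)
    · intro j
      omega
    · intro j
      have := hmle j
      have := j.isLt
      omega
    · exact hvlen'
    · exact hocc'
    · exact hsep'
    · intro j j' hjj'
      right
      constructor
      · have h2 : (j : ℕ) < (j' : ℕ) := hjj'
        omega
      · exact hall j
end

section
/- For all integers t, l, n ≥ 1, beth(2t, l, n) ≤ beth(t, l², n). -/
/-- The sequence `c` of noncyclic words of length `t` over an `l`-letter alphabet,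
no two of which are cyclic rotations of one another, is `n`-good: the partial
order on pairs `(i, r)` given by `(i₁,r₁) ≺ (i₂,r₂)` iff `i₁ < i₂` and the
rotation of `c i₁` by `r₁` is lexicographically smaller than the rotation of
`c i₂` by `r₂`, has no antichain of size `n`. -/
def IsGoodSeq (t l n : ℕ) {N : ℕ} (c : Fin N → List (Fin l)) : Prop :=
  (∀ i, Noncyclic (c i)) ∧
  (∀ i, (c i).length = t) ∧
  (∀ i j, i ≠ j → ¬ List.IsRotated (c i) (c j)) ∧
  ¬ ∃ g : Fin n → Fin N × Fin t, Function.Injective g ∧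
      ∀ a b : Fin n,
        ¬ ((g a).1 < (g b).1 ∧
          List.Lex (· < ·) ((c (g a).1).rotate (g a).2) ((c (g b).1).rotate (g b).2))

/-- `beth t l n` is the maximal length of an `n`-good sequence of noncyclic
words of length `t` over an `l`-letter alphabet, no two of which are cyclic
rotations of one another. -/
noncomputable def beth (t l n : ℕ) : ℕ :=
  sSup {N | ∃ c : Fin N → List (Fin l), IsGoodSeq t l n c}

section Aux

variable {l : ℕ}

def pairFn (a b : Fin l) : Fin (l ^ 2) :=
  ⟨a.val * l + b.val, by have ha := a.isLt; have hb := b.isLt; nlinarith⟩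

def pairW : List (Fin l) → List (Fin (l ^ 2))
  | [] => []
  | [_] => []
  | a :: b :: rest => pairFn a b :: pairW rest

def expandW : List (Fin (l ^ 2)) → List (Fin l)
  | [] => []
  | x :: rest =>
      have hl : 0 < l := by
        rcases Nat.eq_zero_or_pos l with h | h
        · exact absurd x.isLt (by simp [h])
        · exact h
      ⟨x.val / l, Nat.div_lt_of_lt_mul (by have := x.isLt; nlinarith)⟩ ::
      ⟨x.val % l, Nat.mod_lt _ hl⟩ :: expandW rest

lemma pairW_length : ∀ w : List (Fin l), (pairW w).length = w.length / 2
  | [] => by simp [pairW]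
  | [_] => by simp [pairW]
  | _ :: _ :: rest => by
      simp only [pairW, List.length_cons, pairW_length rest]
      omega

lemma pairW_append : ∀ (u : List (Fin l)), Even u.length → ∀ v,
    pairW (u ++ v) = pairW u ++ pairW v
  | [], _, v => rfl
  | [_], hu, v => by simp at hu
  | a :: b :: rest, hu, v => by
      have : Even rest.length := by
        simp only [List.length_cons] at hu
        rcases hu with ⟨k, hk⟩
        exact ⟨k - 1, by omega⟩
      simp only [List.cons_append, pairW]
      rw [pairW_append rest this v]

lemma expandW_append : ∀ (u v : List (Fin (l ^ 2))),
    expandW (u ++ v) = expandW u ++ expandW v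
  | [], v => rfl
  | x :: rest, v => by
      simp only [List.cons_append, expandW]
      rw [expandW_append rest v]

lemma expandW_wpow (v : List (Fin (l ^ 2))) (k : ℕ) :
    expandW (wpow v k) = wpow (expandW v) k := by
  induction k with
  | zero => rfl
  | succ k ih => simp only [wpow, expandW_append, ih]

lemma expandW_pairW : ∀ w : List (Fin l), Even w.length → expandW (pairW w) = w
  | [], _ => rfl
  | [_], hw => by simp at hw
  | a :: b :: rest, hw => by
      have he : Even rest.length := by
        simp only [List.length_cons] at hw
        rcases hw with ⟨k, hk⟩
        exact ⟨k - 1, by omega⟩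
      have hb := b.isLt
      have hl : 0 < l := a.pos
      simp only [pairW, expandW, expandW_pairW rest he, pairFn]
      congr 1
      · ext
        simp only
        rw [mul_comm, Nat.mul_add_div hl, Nat.div_eq_of_lt hb, Nat.add_zero]
      · congr 1
        ext
        simp only
        rw [mul_comm, Nat.mul_add_mod, Nat.mod_eq_of_lt hb]

lemma pairW_inj {u v : List (Fin l)} (hu : Even u.length) (hv : Even v.length)
    (h : pairW u = pairW v) : u = v := by
  rw [← expandW_pairW u hu, ← expandW_pairW v hv, h]

end Aux


section Aux2

variable {l : ℕ}

lemma even_cons_cons {a b : Fin l} {rest : List (Fin l)}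
    (h : Even (a :: b :: rest).length) : Even rest.length := by
  simp only [List.length_cons] at h
  rcases h with ⟨k, hk⟩
  exact ⟨k - 1, by omega⟩

lemma pairFn_lt_of_lt {a b c d : Fin l} (h : a < c) : pairFn a b < pairFn c d := by
  have hb := b.isLt
  have hd := d.isLt
  have h' : a.val < c.val := h
  simp only [pairFn, Fin.mk_lt_mk]
  nlinarith

lemma pairFn_lt_of_eq_lt {a b d : Fin l} (h : b < d) : pairFn a b < pairFn a d := by
  have h' : b.val < d.val := h
  simp only [pairFn, Fin.mk_lt_mk]
  omega

lemma lex_pairW : ∀ {u v : List (Fin l)}, u.length = v.length → Even u.length →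
    List.Lex (· < ·) u v → List.Lex (· < ·) (pairW u) (pairW v)
  | [], [], _, _, h => by cases h
  | [], _ :: _, hlen, _, _ => by simp at hlen
  | _ :: _, [], hlen, _, _ => by simp at hlen
  | [a], c :: v, hlen, hu, h => by simp at hu
  | a :: b :: u, [c], hlen, hu, h => by simp at hlen
  | a :: b :: u, c :: d :: v, hlen, hu, h => by
      have hlen' : u.length = v.length := by simpa using hlen
      have hu' : Even u.length := even_cons_cons hu
      cases h with
      | rel hac => exact List.Lex.rel (pairFn_lt_of_lt hac)
      | cons h =>
        cases h with
        | rel hbd => exact List.Lex.rel (pairFn_lt_of_eq_lt hbd)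
        | cons h => exact List.Lex.cons (lex_pairW hlen' hu' h)

lemma pairW_rotate {w : List (Fin l)} (hw : Even w.length) {r : ℕ} (hr : 2 * r ≤ w.length) :
    (pairW w).rotate r = pairW (w.rotate (2 * r)) := by
  set u := w.take (2 * r) with hu
  set v := w.drop (2 * r) with hv
  have hul : u.length = 2 * r := by simp [hu]; omega
  have huE : Even u.length := by rw [hul]; exact ⟨r, by omega⟩
  have hvE : Even v.length := by
    rcases hw with ⟨k, hk⟩
    have : v.length = w.length - 2 * r := by simp [hv]
    exact ⟨k - r, by omega⟩
  have hw' : w = u ++ v := (List.take_append_drop _ w).symm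
  have hpw : pairW w = pairW u ++ pairW v := by
    rw [hw', pairW_append u huE v]
  have hpul : (pairW u).length = r := by rw [pairW_length, hul]; omega
  have hrot : w.rotate (2 * r) = v ++ u := by
    rw [List.rotate_eq_drop_append_take hr]
  have hr' : r ≤ (pairW w).length := by
    rw [pairW_length]; omega
  rw [List.rotate_eq_drop_append_take hr', hrot, pairW_append v hvE u, hpw]
  rw [List.drop_left' hpul, List.take_left' hpul]

lemma noncyclic_pairW {w : List (Fin l)} (hw : Noncyclic w) (he : Even w.length) :
    Noncyclic (pairW w) := by
  constructor
  · have h1 : 1 ≤ w.length := List.length_pos_iff.mpr hw.1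
    have h2 : 2 ≤ w.length := by
      rcases he with ⟨k, hk⟩; omega
    have : 0 < (pairW w).length := by rw [pairW_length]; omega
    exact List.ne_nil_of_length_pos this
  · intro v k hk heq
    apply hw.2 (expandW v) k hk
    rw [← expandW_pairW w he, heq, expandW_wpow]

end Aux2

lemma goodSeq_card_le {t L n N : ℕ} {c : Fin N → List (Fin L)} (hc : IsGoodSeq t L n c) :
    N ≤ L ^ t := by
  have hinj : Function.Injective
      (fun i => (fun k : Fin t => (c i).get (k.cast (hc.2.1 i).symm))) := by
    intro i j hij
    by_contra hne
    apply hc.2.2.1 i j hne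
    have hceq : c i = c j := by
      apply List.ext_get (by rw [hc.2.1 i, hc.2.1 j])
      intro m h1 h2
      have := congrFun hij ⟨m, by rwa [← hc.2.1 i]⟩
      simpa using this
    rw [hceq]
  have := Fintype.card_le_of_injective _ hinj
  simpa using this

lemma goodSeq_zero (t L n : ℕ) (hn : 1 ≤ n) :
    ∃ c : Fin 0 → List (Fin L), IsGoodSeq t L n c := by
  refine ⟨fun i => i.elim0, fun i => i.elim0, fun i => i.elim0, fun i => i.elim0, ?_⟩
  rintro ⟨g, -, -⟩
  exact (g ⟨0, hn⟩).1.elim0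

lemma goodSeq_map {t l n N : ℕ} (ht : 1 ≤ t) (c : Fin N → List (Fin l))
    (hc : IsGoodSeq (2 * t) l n c) : IsGoodSeq t (l ^ 2) n (fun i => pairW (c i)) := by
  obtain ⟨hnc, hlen, hrot, hanti⟩ := hc
  have heven : ∀ i, Even (c i).length := fun i => ⟨t, by rw [hlen i]; ring⟩
  have hlen' : ∀ i, (pairW (c i)).length = t := fun i => by
    rw [pairW_length, hlen i]; omega
  refine ⟨fun i => noncyclic_pairW (hnc i) (heven i), hlen', ?_, ?_⟩
  · intro i j hij ⟨m, hm⟩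
    apply hrot i j hij
    refine ⟨2 * (m % t), ?_⟩
    have hmt : m % t < t := Nat.mod_lt _ ht
    have hm' : (pairW (c i)).rotate m = pairW (c j) := hm
    have h1 : (pairW (c i)).rotate (m % t) = pairW (c j) := by
      rw [← hm', show m % t = m % (pairW (c i)).length by rw [hlen' i]]
      exact List.rotate_mod _ _
    rw [pairW_rotate (heven i) (by rw [hlen i]; omega)] at h1
    apply pairW_inj _ (heven j) h1
    · rw [List.length_rotate]; exact heven i
  · rintro ⟨g, hginj, hgchain⟩
    apply hanti
    refine ⟨fun a => ((g a).1, ⟨2 * ((g a).2 : ℕ), by have := (g a).2.isLt; omega⟩), ?_, ?_⟩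
    · intro a b hab
      apply hginj
      simp only [Prod.mk.injEq, Fin.mk.injEq] at hab
      exact Prod.ext hab.1 (Fin.ext (by omega))
    · intro a b
      rintro ⟨hlt, hlex⟩
      apply hgchain a b
      refine ⟨hlt, ?_⟩
      have hL : ((c (g a).1).rotate (2 * ((g a).2 : ℕ))).length
          = ((c (g b).1).rotate (2 * ((g b).2 : ℕ))).length := by
        simp [List.length_rotate, hlen]
      have hE : Even ((c (g a).1).rotate (2 * ((g a).2 : ℕ))).length := by
        rw [List.length_rotate]; exact heven _
      have := lex_pairW hL hE hlex
      rwa [← pairW_rotate (heven _) (by rw [hlen]; have := (g a).2.isLt; omega),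
        ← pairW_rotate (heven _) (by rw [hlen]; have := (g b).2.isLt; omega)] at this


/-- For all integers `t, l, n ≥ 1`, `beth(2t, l, n) ≤ beth(t, l², n)`. -/
theorem beth_double_period (t l n : ℕ) (ht : 1 ≤ t) (hl : 1 ≤ l) (hn : 1 ≤ n) :
    beth (2 * t) l n ≤ beth t (l ^ 2) n := by
  apply csSup_le_csSup
  · exact ⟨(l ^ 2) ^ t, fun N hN => by
      obtain ⟨c, hc⟩ := hN
      exact goodSeq_card_le hc⟩
  · exact ⟨0, goodSeq_zero _ _ _ hn⟩
  · rintro N ⟨c, hc⟩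
    exact ⟨fun i => pairW (c i), goodSeq_map ht c hc⟩
end

section
/- For all integers l ≥ 1 and n ≥ 2, and every integer t with 1 ≤ t < n, one has beth(t, l, n) < 4(l+1)^n·n^4. -/
/-- For all integers `l ≥ 1`, `n ≥ 2` and `1 ≤ t < n`,
`beth(t, l, n) < 4(l+1)^n·n^4`. -/
theorem beth_upper_bound (t l n : ℕ) (hl : 1 ≤ l) (hn : 2 ≤ n)
    (ht : 1 ≤ t) (htn : t < n) :
    beth t l n < 4 * (l + 1) ^ n * n ^ 4 := by
  have hbound : ∀ N ∈ {N | ∃ c : Fin N → List (Fin l), IsGoodSeq t l n c},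
      N ≤ l ^ t := by
    rintro N ⟨c, hnc, hlen, hrot, -⟩
    have hinj : Function.Injective
        (fun i (k : Fin t) => (c i).get ⟨k.1, by rw [hlen]; exact k.2⟩) := by
      intro i j hij
      by_contra hne
      apply hrot i j hne
      have : c i = c j := by
        apply List.ext_get (by rw [hlen i, hlen j])
        intro m h1 h2
        have := congrFun hij ⟨m, by rwa [hlen i] at h1⟩
        simpa using this
      rw [this]
    have := Fintype.card_le_of_injective _ hinj
    simpa using this
  have hne : (0 : ℕ) ∈ {N | ∃ c : Fin N → List (Fin l), IsGoodSeq t l n c} := by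
    refine ⟨Fin.elim0, fun i => i.elim0, fun i => i.elim0, fun i => i.elim0, ?_⟩
    rintro ⟨g, -, -⟩
    exact (g ⟨0, by omega⟩).1.elim0
  have h1 : beth t l n ≤ l ^ t := csSup_le ⟨0, hne⟩ hbound
  have h2 : l ^ t < 4 * (l + 1) ^ n * n ^ 4 := by
    calc l ^ t < (l + 1) ^ t := Nat.pow_lt_pow_left (by omega) (by omega)
      _ ≤ (l + 1) ^ n := Nat.pow_le_pow_right (by omega) (by omega)
      _ = (l + 1) ^ n * 1 := by ring
      _ ≤ (l + 1) ^ n * (4 * n ^ 4) :=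
          Nat.mul_le_mul_left _ (by nlinarith [Nat.one_le_pow 4 n (show 0 < n by omega)])
      _ = 4 * (l + 1) ^ n * n ^ 4 := by ring
  omega
end

section
/- For all integers l ≥ 1 and n ≥ 2, beth(2, l, n) ≤ (2l−1)(n−1)(n−2)/2. -/
namespace BethTwoProof

/-- lex comparison on two-letter words. -/
lemma lex_pair {l : ℕ} (a b a' b' : Fin l) :
    List.Lex (· < ·) [a,b] [a',b'] ↔ (a < a' ∨ (a = a' ∧ b < b')) := by
  constructor
  · intro h
    cases h with
    | cons h =>
      cases h with
      | rel h => exact Or.inr ⟨rfl, h⟩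
      | cons h => cases h
    | rel h => exact Or.inl h
  · rintro (h | ⟨rfl, h⟩)
    exacts [List.Lex.rel h, List.Lex.cons (List.Lex.rel h)]

lemma key_iff (l a b a' b' : ℕ) (hb : b < l) (hb' : b' < l) :
    l * a + b < l * a' + b' ↔ (a < a' ∨ (a = a' ∧ b < b')) := by
  rcases Nat.lt_trichotomy a a' with h | h | h
  · have h1 : l * (a + 1) ≤ l * a' := Nat.mul_le_mul_left l h
    rw [Nat.mul_succ] at h1
    constructor
    · intro _; exact Or.inl h
    · intro _; omega
  · subst h
    constructor
    · intro hlt; exact Or.inr ⟨rfl, by omega⟩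
    · rintro (h | ⟨-, h⟩); · omega
      omega
  · have h1 : l * (a' + 1) ≤ l * a := Nat.mul_le_mul_left l h
    rw [Nat.mul_succ] at h1
    constructor
    · intro hlt; omega
    · rintro (h2 | ⟨h2, -⟩) <;> omega

/-- numeric encoding of the rotation `r` of the word `[x i, y i]`. -/
def nu (l : ℕ) {N : ℕ} (x y : Fin N → Fin l) (i : Fin N) (r : Fin 2) : ℕ :=
  if (r : ℕ) = 0 then l * (x i : ℕ) + (y i : ℕ) else l * (y i : ℕ) + (x i : ℕ)

lemma lex_rot {l N : ℕ} (c : Fin N → List (Fin l)) (x y : Fin N → Fin l)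
    (hcxy : ∀ i, c i = [x i, y i]) (i j : Fin N) (r s : Fin 2) :
    List.Lex (· < ·) ((c i).rotate r) ((c j).rotate s) ↔
      nu l x y i r < nu l x y j s := by
  have hrot : ∀ (k : Fin N) (r : Fin 2),
      (c k).rotate r = if (r : ℕ) = 0 then [x k, y k] else [y k, x k] := by
    intro k r
    rcases r with ⟨rv, hrv⟩
    interval_cases rv
    · simp [hcxy k]
    · rw [hcxy k]; rfl
  rw [hrot i r, hrot j s]
  unfold nu
  rcases r with ⟨rv, hrv⟩
  rcases s with ⟨sv, hsv⟩
  interval_cases rv <;> interval_cases sv <;>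
    · norm_num
      rw [← List.lex_lt, lex_pair, key_iff l _ _ _ _ (Fin.isLt _) (Fin.isLt _)]
      constructor <;>
        · rintro (h | ⟨h1, h2⟩)
          exacts [Or.inl h, Or.inr ⟨by simp [Fin.ext_iff] at h1 ⊢; omega, h2⟩]


/-- antichain in the poset: no strictly comparable pair. -/
def IsAC {N : ℕ} (ν : Fin N → Fin 2 → ℕ) (S : Finset (Fin N × Fin 2)) : Prop :=
  ∀ p ∈ S, ∀ q ∈ S, p.1 < q.1 → ¬ ν p.1 p.2 < ν q.1 q.2

/-- sizes of antichains with all indices `≤ i`, all values `≥ ν i r`,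
containing `(i, r)`. -/
def ACset {N : ℕ} (ν : Fin N → Fin 2 → ℕ) (i : Fin N) (r : Fin 2) : Set ℕ :=
  {k | ∃ S : Finset (Fin N × Fin 2), IsAC ν S ∧
        (∀ p ∈ S, p.1 ≤ i ∧ ν i r ≤ ν p.1 p.2) ∧ (i, r) ∈ S ∧ S.card = k}

noncomputable def acval {N : ℕ} (ν : Fin N → Fin 2 → ℕ) (i : Fin N) (r : Fin 2) : ℕ :=
  sSup (ACset ν i r)

lemma one_mem_ACset {N : ℕ} (ν : Fin N → Fin 2 → ℕ) (i : Fin N) (r : Fin 2) :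
    1 ∈ ACset ν i r := by
  refine ⟨{(i, r)}, ?_, ?_, Finset.mem_singleton_self _, Finset.card_singleton _⟩
  · intro p hp q hq h
    rw [Finset.mem_singleton] at hp hq
    subst hp; subst hq
    exact absurd h (lt_irrefl _)
  · intro p hp
    rw [Finset.mem_singleton] at hp
    subst hp
    exact ⟨le_rfl, le_rfl⟩

section

variable {N n : ℕ} {ν : Fin N → Fin 2 → ℕ}
  (hbd : ∀ S : Finset (Fin N × Fin 2), IsAC ν S → S.card ≤ n - 1)

include hbd

lemma ACset_bdd (i : Fin N) (r : Fin 2) : BddAbove (ACset ν i r) := by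
  refine ⟨n - 1, ?_⟩
  rintro k ⟨S, hS, -, -, rfl⟩
  exact hbd S hS

lemma acval_le (i : Fin N) (r : Fin 2) : acval ν i r ≤ n - 1 :=
  csSup_le ⟨1, one_mem_ACset ν i r⟩ (by rintro k ⟨S, hS, -, -, rfl⟩; exact hbd S hS)

lemma one_le_acval (i : Fin N) (r : Fin 2) : 1 ≤ acval ν i r :=
  le_csSup (ACset_bdd hbd i r) (one_mem_ACset ν i r)

lemma acval_step {i j : Fin N} {r r' : Fin 2} (hij : i ≤ j) (hr : ν j r' ≤ ν i r)
    (hst : i < j ∨ ν j r' < ν i r) : acval ν i r + 1 ≤ acval ν j r' := by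
  obtain ⟨S, hac, hmem, hin, hcard⟩ :=
    Nat.sSup_mem ⟨1, one_mem_ACset ν i r⟩ (ACset_bdd hbd i r)
  have hnotin : (j, r') ∉ S := by
    intro h
    rcases hst with h' | h'
    · exact absurd (hmem _ h).1 (not_le.2 h')
    · exact absurd (hmem _ h).2 (not_le.2 h')
  refine le_csSup (ACset_bdd hbd j r') ?_
  refine ⟨insert (j, r') S, ?_, ?_, Finset.mem_insert_self _ _, ?_⟩
  · intro p hp q hq hlt
    rcases Finset.mem_insert.1 hp with rfl | hp <;> rcases Finset.mem_insert.1 hq with rfl | hq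
    · exact absurd hlt (lt_irrefl _)
    · exact absurd hlt (not_lt.2 ((hmem _ hq).1.trans hij))
    · exact not_lt.2 (hr.trans (hmem _ hp).2)
    · exact hac _ hp _ hq hlt
  · intro p hp
    rcases Finset.mem_insert.1 hp with rfl | hp
    · exact ⟨le_rfl, le_rfl⟩
    · exact ⟨(hmem _ hp).1.trans hij, hr.trans (hmem _ hp).2⟩
  · rw [Finset.card_insert_of_notMem hnotin, hcard]; rfl

end


theorem main_aux (l n N : ℕ) (hn : 2 ≤ n) (c : Fin N → List (Fin l))
    (x y : Fin N → Fin l) (hcxy : ∀ i, c i = [x i, y i]) (hne : ∀ i, x i ≠ y i)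
    (hgood : ¬ ∃ g : Fin n → Fin N × Fin 2, Function.Injective g ∧
      ∀ a b : Fin n, ¬ ((g a).1 < (g b).1 ∧
        List.Lex (· < ·) ((c (g a).1).rotate ((g a).2 : ℕ))
          ((c (g b).1).rotate ((g b).2 : ℕ)))) :
    N ≤ (2 * l - 1) * (n - 1) * (n - 2) / 2 := by
  classical
  set ν := nu l x y with hν
  have hvne : ∀ i, (x i : ℕ) ≠ (y i : ℕ) := fun i h => hne i (Fin.ext h)
  -- the antichain bound coming from goodness
  have hbd : ∀ S : Finset (Fin N × Fin 2), IsAC ν S → S.card ≤ n - 1 := by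
    intro S hS
    by_contra hcon
    have hnle : n ≤ S.card := by omega
    set g : Fin n → Fin N × Fin 2 :=
      fun a => (S.equivFin.symm (Fin.castLE hnle a) : Fin N × Fin 2) with hg
    have hginj : Function.Injective g := by
      intro a b hab
      have h2 := S.equivFin.symm.injective (Subtype.coe_injective hab)
      exact Fin.ext (by simpa using congrArg Fin.val h2)
    refine hgood ⟨g, hginj, ?_⟩
    rintro a b ⟨hlt, hlex⟩
    rw [lex_rot c x y hcxy] at hlex
    exact hS _ (S.equivFin.symm (Fin.castLE hnle a)).2 _
      (S.equivFin.symm (Fin.castLE hnle b)).2 hlt hlex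
  -- small and big rotations
  set sm : Fin N → Fin 2 := fun i => if (x i : ℕ) < y i then 0 else 1 with hsm
  set bg : Fin N → Fin 2 := fun i => if (x i : ℕ) < y i then 1 else 0 with hbg
  have hmm : ∀ i, ν i (sm i) = l * min (x i : ℕ) (y i) + max (x i : ℕ) (y i) ∧
      ν i (bg i) = l * max (x i : ℕ) (y i) + min (x i : ℕ) (y i) := by
    intro i
    by_cases h : (x i : ℕ) < y i
    · have h1 : sm i = 0 := by simp only [hsm]; exact if_pos h
      have h2 : bg i = 1 := by simp only [hbg]; exact if_pos h
      rw [h1, h2]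
      constructor <;> simp [hν, nu, Nat.min_def, Nat.max_def, le_of_lt h]
    · have h1 : sm i = 1 := by simp only [hsm]; exact if_neg h
      have h2 : bg i = 0 := by simp only [hbg]; exact if_neg h
      rw [h1, h2]
      have h3 : ¬ ((x i : ℕ) ≤ y i) := by have := hvne i; omega
      constructor <;> simp [hν, nu, Nat.min_def, Nat.max_def, h3]
  have hss : ∀ i, ν i (sm i) < ν i (bg i) := by
    intro i
    rw [(hmm i).1, (hmm i).2]
    have hlt : min (x i : ℕ) (y i) < max (x i : ℕ) (y i) := by have := hvne i; omega
    have h1 : l * (min (x i : ℕ) (y i) + 1) ≤ l * max (x i : ℕ) (y i) :=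
      Nat.mul_le_mul_left l hlt
    rw [Nat.mul_succ] at h1
    have h2 : max (x i : ℕ) (y i) < l := by
      have := (x i).isLt; have := (y i).isLt; omega
    omega
  have hAB : ∀ i, acval ν i (bg i) + 1 ≤ acval ν i (sm i) :=
    fun i => acval_step hbd le_rfl (le_of_lt (hss i)) (Or.inr (hss i))
  -- strict growth of letter sums inside a fixed (A, B)-class
  have hcmp : ∀ i j, i < j → acval ν i (bg i) = acval ν j (bg j) →
      acval ν i (sm i) = acval ν j (sm j) → (x i : ℕ) + (y i : ℕ) < (x j : ℕ) + (y j : ℕ) := by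
    intro i j hij hA hB
    have h1 : ν i (sm i) < ν j (sm j) := by
      by_contra h
      push_neg at h
      have := acval_step hbd (le_of_lt hij) h (Or.inl hij)
      omega
    have h2 : ν i (bg i) < ν j (bg j) := by
      by_contra h
      push_neg at h
      have := acval_step hbd (le_of_lt hij) h (Or.inl hij)
      omega
    rw [(hmm i).1, (hmm j).1] at h1
    rw [(hmm i).2, (hmm j).2] at h2
    have hb1 : max (x i : ℕ) (y i) < l := by
      have := (x i).isLt; have := (y i).isLt; omega
    have hb2 : max (x j : ℕ) (y j) < l := by
      have := (x j).isLt; have := (y j).isLt; omega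
    have hb3 : min (x i : ℕ) (y i) < l := by omega
    have hb4 : min (x j : ℕ) (y j) < l := by omega
    have d1 := (key_iff l _ _ _ _ hb1 hb2).1 h1
    have d2 := (key_iff l _ _ _ _ hb3 hb4).1 h2
    omega
  -- counting
  set φ : Fin N → ℕ × ℕ × ℕ :=
    fun i => ((x i : ℕ) + (y i : ℕ), acval ν i (bg i), acval ν i (sm i)) with hφ
  set T : Finset (ℕ × ℕ × ℕ) :=
    Finset.Icc 1 (2 * l - 3) ×ˢ
      ((Finset.Icc 1 (n-1) ×ˢ Finset.Icc 1 (n-1)).filter fun p => p.1 < p.2) with hT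
  have hmapsto : ∀ i : Fin N, φ i ∈ T := by
    intro i
    have hx := (x i).isLt
    have hy := (y i).isLt
    have h1 := one_le_acval hbd i (bg i)
    have h2 := acval_le hbd i (sm i)
    have h3 := hAB i
    simp only [hT, hφ, Finset.mem_product, Finset.mem_filter, Finset.mem_Icc]
    refine ⟨⟨?_, ?_⟩, ⟨⟨⟨?_, ?_⟩, ?_, ?_⟩, ?_⟩⟩ <;> first | omega | (have := hvne i; omega)
  have hinj : Set.InjOn φ (Finset.univ : Finset (Fin N)) := by
    intro i _ j _ hij
    by_contra hne2
    rcases Ne.lt_or_gt hne2 with h | h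
    · have := hcmp i j h (congrArg (fun p => p.2.1) hij) (congrArg (fun p => p.2.2) hij)
      have hs := congrArg Prod.fst hij
      simp [hφ] at hs
      omega
    · have := hcmp j i h (congrArg (fun p => p.2.1) hij).symm (congrArg (fun p => p.2.2) hij).symm
      have hs := congrArg Prod.fst hij
      simp [hφ] at hs
      omega
  have hcard : N ≤ T.card := by
    have := Finset.card_le_card_of_injOn φ (fun i _ => hmapsto i) hinj
    simpa using this
  have htri : ((Finset.Icc 1 (n-1) ×ˢ Finset.Icc 1 (n-1)).filter fun p => p.1 < p.2).card
      ≤ (n - 1) * (n - 2) / 2 := by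
    have hmem : ∀ p ∈ ((Finset.Icc 1 (n-1) ×ˢ Finset.Icc 1 (n-1)).filter
        fun p : ℕ × ℕ => p.1 < p.2),
        ({p.1, p.2} : Finset ℕ) ∈ (Finset.Icc 1 (n-1)).powersetCard 2 := by
      intro p hp
      simp only [Finset.mem_filter, Finset.mem_product, Finset.mem_Icc] at hp
      rw [Finset.mem_powersetCard]
      refine ⟨?_, ?_⟩
      · intro q hq
        simp only [Finset.mem_insert, Finset.mem_singleton] at hq
        rcases hq with rfl | rfl <;> rw [Finset.mem_Icc] <;> omega
      · exact Finset.card_pair (by omega)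
    have hinj2 : Set.InjOn (fun p : ℕ × ℕ => ({p.1, p.2} : Finset ℕ))
        ((Finset.Icc 1 (n-1) ×ˢ Finset.Icc 1 (n-1)).filter fun p => p.1 < p.2) := by
      intro p hp q hq heq
      have heq2 : ({p.1, p.2} : Finset ℕ) = {q.1, q.2} := heq
      simp only [Finset.coe_filter, Set.mem_setOf_eq, Finset.mem_product, Finset.mem_Icc] at hp hq
      have e1 : p.1 ∈ ({q.1, q.2} : Finset ℕ) := by
        rw [← heq2]; simp
      have e2 : p.2 ∈ ({q.1, q.2} : Finset ℕ) := by
        rw [← heq2]; simp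
      have e3 : q.1 ∈ ({p.1, p.2} : Finset ℕ) := by
        rw [heq2]; simp
      simp only [Finset.mem_insert, Finset.mem_singleton] at e1 e2 e3
      have : p.1 = q.1 ∧ p.2 = q.2 := by omega
      exact Prod.ext this.1 this.2
    have := Finset.card_le_card_of_injOn _ hmem hinj2
    rw [Finset.card_powersetCard, Nat.card_Icc] at this
    calc ((Finset.Icc 1 (n-1) ×ˢ Finset.Icc 1 (n-1)).filter fun p => p.1 < p.2).card
        ≤ (n - 1 + 1 - 1).choose 2 := this
      _ = (n - 1) * (n - 2) / 2 := by
          rw [show n - 1 + 1 - 1 = n - 1 by omega, Nat.choose_two_right,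
            show n - 1 - 1 = n - 2 by omega]
  have hTcard : T.card ≤ (2 * l - 3) * ((n - 1) * (n - 2) / 2) := by
    rw [hT, Finset.card_product, Nat.card_Icc]
    have : (2 * l - 3 + 1 - 1) = 2 * l - 3 := by omega
    rw [this]
    exact Nat.mul_le_mul_left _ htri
  have heven : 2 ∣ (n - 1) * (n - 2) := by
    have := Nat.even_mul_succ_self (n - 2)
    rw [show n - 2 + 1 = n - 1 by omega] at this
    rw [mul_comm]
    exact this.two_dvd
  calc N ≤ (2 * l - 3) * ((n - 1) * (n - 2) / 2) := le_trans hcard hTcard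
    _ ≤ (2 * l - 1) * ((n - 1) * (n - 2) / 2) :=
        Nat.mul_le_mul_right _ (by omega)
    _ = (2 * l - 1) * (n - 1) * (n - 2) / 2 := by
        rw [mul_assoc, Nat.mul_div_assoc _ heven]

end BethTwoProof



/-- For all integers `l ≥ 1` and `n ≥ 2`, `beth(2, l, n) ≤ (2l−1)(n−1)(n−2)/2`. -/
theorem beth_two_upper_bound (l n : ℕ) (hl : 1 ≤ l) (hn : 2 ≤ n) :
    beth 2 l n ≤ (2 * l - 1) * (n - 1) * (n - 2) / 2 := by
  apply csSup_le'
  rintro N ⟨c, hnc, hlen, hrotne, hgood⟩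
  have hex : ∀ i, ∃ a b : Fin l, c i = [a, b] ∧ a ≠ b := by
    intro i
    obtain ⟨a, b, hab⟩ := List.length_eq_two.1 (hlen i)
    refine ⟨a, b, hab, ?_⟩
    rintro rfl
    exact (hnc i).2 [a] 2 le_rfl (by rw [hab]; rfl)
  choose x y hcxy hne using hex
  exact BethTwoProof.main_aux l n N hn c x y hcxy hne hgood
end
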